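/- arXiv:2205.06063 — 8 statements merged into one kernel-verified Lean document; each statement's English description precedes it below -/
import Mathlib

section
/- Assume ρ > 0, Θ_B > 1, 1 < Θ_th < Θ_B/(Θ_B − 1), and set ε3 = (Θ_B − 1)Θ_th/(ρ(Θ_th − (Θ_th − 1)Θ_B)) and ε4 = Θ_B(Θ_th − 1)/(ρ(Θ_B − Θ_th(Θ_B − 1))). For any g_B > ε3 and g_F > 0, with ω = (ρg_B + 1)(Θ_B − 1)/(ρg_B Θ_B), one has ρ(1 − Θ_th ω)g_F < Θ_th − 1 if and only if g_F < ε4 g_B/(g_B − ε3). -/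
/-- Assume ρ > 0, Θ_B > 1, 1 < Θ_th < Θ_B/(Θ_B − 1), and set
ε3 = (Θ_B − 1)Θ_th/(ρ(Θ_th − (Θ_th − 1)Θ_B)) and ε4 = Θ_B(Θ_th − 1)/(ρ(Θ_B − Θ_th(Θ_B − 1))).
For any g_B > ε3 and g_F > 0, with ω = (ρg_B + 1)(Θ_B − 1)/(ρg_B Θ_B), one has
ρ(1 − Θ_th ω)g_F < Θ_th − 1 iff g_F < ε4 g_B/(g_B − ε3). -/
theorem stmt_5 (ρ ΘB Θth gB gF : ℝ) (hρ : 0 < ρ) (hΘB : 1 < ΘB) (hΘth : 1 < Θth)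
    (hth : Θth < ΘB / (ΘB - 1))
    (hgB : (ΘB - 1) * Θth / (ρ * (Θth - (Θth - 1) * ΘB)) < gB) (hgF : 0 < gF) :
    ρ * (1 - Θth * ((ρ * gB + 1) * (ΘB - 1) / (ρ * gB * ΘB))) * gF < Θth - 1 ↔
      gF < (ΘB * (Θth - 1) / (ρ * (ΘB - Θth * (ΘB - 1)))) * gB /
        (gB - (ΘB - 1) * Θth / (ρ * (Θth - (Θth - 1) * ΘB))) := by
  have hΘB1 : (0:ℝ) < ΘB - 1 := by linarith
  have hth' : Θth * (ΘB - 1) < ΘB := (lt_div_iff₀ hΘB1).mp hth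
  have hD : 0 < Θth - (Θth - 1) * ΘB := by nlinarith
  have hρD : 0 < ρ * (Θth - (Θth - 1) * ΘB) := mul_pos hρ hD
  have hε3 : 0 < (ΘB - 1) * Θth / (ρ * (Θth - (Θth - 1) * ΘB)) :=
    div_pos (mul_pos hΘB1 (by linarith)) hρD
  have hgBpos : 0 < gB := lt_trans hε3 hgB
  have hN : 0 < ρ * (Θth - (Θth - 1) * ΘB) * gB - Θth * (ΘB - 1) := by
    have := (div_lt_iff₀ hρD).mp hgB
    nlinarith
  have hρgB : ρ * gB * ΘB ≠ 0 := by positivity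
  rw [show ρ * (1 - Θth * ((ρ * gB + 1) * (ΘB - 1) / (ρ * gB * ΘB))) * gF =
      (ρ * (Θth - (Θth - 1) * ΘB) * gB - Θth * (ΘB - 1)) * gF / (gB * ΘB) from by
    field_simp; ring]
  rw [div_lt_iff₀ (by positivity : (0:ℝ) < gB * ΘB)]
  rw [show (ΘB * (Θth - 1) / (ρ * (ΘB - Θth * (ΘB - 1)))) * gB /
        (gB - (ΘB - 1) * Θth / (ρ * (Θth - (Θth - 1) * ΘB))) =
      ΘB * (Θth - 1) * gB / (ρ * (Θth - (Θth - 1) * ΘB) * gB - Θth * (ΘB - 1)) from by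
    have h1 : ρ * (ΘB - Θth * (ΘB - 1)) ≠ 0 := by
      have : ΘB - Θth * (ΘB - 1) = Θth - (Θth - 1) * ΘB := by ring
      rw [this]; exact hρD.ne'
    rw [div_eq_div_iff (by
      have h3 : 0 < gB - (ΘB - 1) * Θth / (ρ * (Θth - (Θth - 1) * ΘB)) := sub_pos.mpr hgB
      exact h3.ne') hN.ne']
    rw [show ΘB - Θth * (ΘB - 1) = Θth - (Θth - 1) * ΘB by ring]
    generalize ρ * (Θth - (Θth - 1) * ΘB) = c at hρD ⊢
    have hc : c ≠ 0 := hρD.ne'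
    field_simp]
  rw [lt_div_iff₀ hN]
  constructor <;> intro h <;> nlinarith [h]
end

section
/- Let m ≥ 1 be an integer, λ_B, λ_F > 0, and let G_B, G_F be independent Gamma random variables with shape m and rates λ_B, λ_F respectively. For every a ≥ 0: P(G_F < G_B and G_B > a) = 1 − F_B(a) − (λ_B^m/Γ(m)) · Σ_{i=0}^{m−1} (λ_F^i / (i!·A2^{i+m})) · Γ(i+m, A2·a), where A2 = λ_B + λ_F, F_B is the CDF of G_B, and Γ(s,x) = ∫_x^∞ t^{s−1}e^{−t} dt is the upper incomplete Gamma function. -/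
open MeasureTheory ProbabilityTheory

/-- The law of a Gamma random variable with integer shape `m` and rate `l`: the measure on ℝ
with density f(x) = l^m x^(m−1) e^(−lx)/Γ(m) for x > 0 (w.r.t. Lebesgue measure). -/
noncomputable def gammaLaw (m : ℕ) (l : ℝ) : Measure ℝ :=
  volume.withDensity fun x =>
    ENNReal.ofReal
      (if 0 < x then l ^ m * x ^ (m - 1) * Real.exp (-(l * x)) / Real.Gamma m else 0)

/-- The CDF F(x) = 1 − e^(−lx) Σ_{i=0}^{m−1} (lx)^i/i! of a Gamma random variable with integer
shape `m` and rate `l`. -/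
noncomputable def gammaCDF (m : ℕ) (l x : ℝ) : ℝ :=
  1 - Real.exp (-(l * x)) * ∑ i ∈ Finset.range m, (l * x) ^ i / (Nat.factorial i : ℝ)

/-- The upper incomplete Gamma function Γ(s,x) = ∫_x^∞ t^(s−1) e^(−t) dt. -/
noncomputable def upperGamma (s x : ℝ) : ℝ := ∫ t in Set.Ioi x, t ^ (s - 1) * Real.exp (-t)

namespace Stmt8Aux

open Set Filter

noncomputable def dens (m : ℕ) (l x : ℝ) : ℝ := l ^ m * x ^ (m - 1) * Real.exp (-(l * x)) / Real.Gamma m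

lemma intOn_pow_exp (n : ℕ) {r c : ℝ} (hr : 0 < r) (hc : 0 ≤ c) :
    IntegrableOn (fun x : ℝ => x ^ n * Real.exp (-(r * x))) (Ioi c) := by
  have h1 : IntegrableOn (fun t : ℝ => t ^ n * Real.exp (-t)) (Ioi 0) := by
    have h := Real.GammaIntegral_convergent (s := (n : ℝ) + 1) (by positivity)
    refine IntegrableOn.congr_fun h (fun x _ => ?_) measurableSet_Ioi
    rw [add_sub_cancel_right, Real.rpow_natCast]; ring
  have h0 : IntegrableOn (fun t : ℝ => t ^ n * Real.exp (-t)) (Ioi (r * c)) :=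
    h1.mono_set (Ioi_subset_Ioi (by positivity))
  have h2 := (integrableOn_Ioi_comp_mul_left_iff (fun t : ℝ => t ^ n * Real.exp (-t)) c hr).2 h0
  have h3 := h2.const_mul ((r : ℝ) ^ n)⁻¹
  refine IntegrableOn.congr_fun h3 (fun x _ => ?_) measurableSet_Ioi
  have hrn : (r : ℝ) ^ n ≠ 0 := by positivity
  field_simp [mul_pow]
  ring

lemma integral_pow_exp (n : ℕ) {r c : ℝ} (hr : 0 < r) :
    ∫ x in Ioi c, x ^ n * Real.exp (-(r * x)) = upperGamma ((n : ℝ) + 1) (r * c) / r ^ (n + 1) := by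
  have hug : upperGamma ((n : ℝ) + 1) (r * c) = ∫ t in Ioi (r * c), t ^ n * Real.exp (-t) := by
    unfold upperGamma
    refine setIntegral_congr_fun measurableSet_Ioi (fun t _ => ?_)
    rw [add_sub_cancel_right, Real.rpow_natCast]
  have h := MeasureTheory.integral_comp_mul_left_Ioi (fun t : ℝ => t ^ n * Real.exp (-t)) c hr
  have hrn : (r : ℝ) ^ n ≠ 0 := by positivity
  have hstep : (fun x : ℝ => x ^ n * Real.exp (-(r * x)))
      = fun x : ℝ => ((r : ℝ) ^ n)⁻¹ * ((r * x) ^ n * Real.exp (-(r * x))) := by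
    funext x; rw [mul_pow]; field_simp
  rw [hstep]
  rw [integral_const_mul, h, hug, smul_eq_mul]
  field_simp [pow_succ]
  ring

lemma hasDeriv_G (k : ℕ) (l : ℝ) (x : ℝ) :
    HasDerivAt
      (fun x => Real.exp (-(l * x)) * ∑ i ∈ Finset.range (k + 1), (l * x) ^ i / (Nat.factorial i : ℝ))
      (-(l ^ (k + 1) * x ^ k * Real.exp (-(l * x)) / (Nat.factorial k : ℝ))) x := by
  have hlin : HasDerivAt (fun x : ℝ => l * x) l x := by
    simpa using (hasDerivAt_id x).const_mul l
  have hexp : HasDerivAt (fun x : ℝ => Real.exp (-(l * x))) (Real.exp (-(l * x)) * (-l)) x :=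
    hlin.neg.exp
  have hsum : HasDerivAt
      (fun x : ℝ => ∑ i ∈ Finset.range (k + 1), (l * x) ^ i / (Nat.factorial i : ℝ))
      (∑ i ∈ Finset.range (k + 1), ((i : ℝ) * (l * x) ^ (i - 1) * l) / (Nat.factorial i : ℝ)) x :=
    HasDerivAt.fun_sum fun i _ => (hlin.pow i).div_const _
  have hS' : ∑ i ∈ Finset.range (k + 1), ((i : ℝ) * (l * x) ^ (i - 1) * l) / (Nat.factorial i : ℝ)
      = l * ∑ i ∈ Finset.range k, (l * x) ^ i / (Nat.factorial i : ℝ) := by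
    rw [Finset.sum_range_succ']
    simp only [Nat.cast_zero, zero_mul, zero_div, add_zero, Finset.mul_sum]
    refine Finset.sum_congr rfl fun i _ => ?_
    have h2 : ((Nat.factorial i : ℝ)) ≠ 0 := Nat.cast_ne_zero.2 (Nat.factorial_ne_zero i)
    have h3 : ((i : ℝ) + 1) ≠ 0 := by positivity
    rw [Nat.add_sub_cancel, Nat.factorial_succ]
    push_cast
    field_simp
  have := hexp.mul hsum
  refine this.congr_deriv ?_
  rw [hS', Finset.sum_range_succ, mul_pow, pow_succ]
  ring

lemma tendsto_G (k : ℕ) {l : ℝ} (hl : 0 < l) :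
    Tendsto (fun x => Real.exp (-(l * x)) * ∑ i ∈ Finset.range (k + 1), (l * x) ^ i / (Nat.factorial i : ℝ))
      atTop (nhds 0) := by
  have h1 : Tendsto (fun x : ℝ => l * x) atTop atTop :=
    Filter.tendsto_id.const_mul_atTop hl
  have h2 : ∀ i : ℕ, Tendsto (fun x : ℝ => (l * x) ^ i * Real.exp (-(l * x)) / (Nat.factorial i : ℝ))
      atTop (nhds 0) := by
    intro i
    have := (Real.tendsto_pow_mul_exp_neg_atTop_nhds_zero i).comp h1
    simpa using this.div_const (Nat.factorial i : ℝ)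
  have h3 := tendsto_finset_sum (Finset.range (k + 1)) (fun i _ => h2 i)
  simp only [Finset.sum_const_zero] at h3
  refine h3.congr fun x => ?_
  rw [Finset.mul_sum]
  exact Finset.sum_congr rfl fun i _ => by ring

lemma tail_integral (k : ℕ) {l a : ℝ} (hl : 0 < l) (ha : 0 ≤ a) :
    ∫ x in Ioi a, l ^ (k + 1) * x ^ k * Real.exp (-(l * x)) / (Nat.factorial k : ℝ)
      = Real.exp (-(l * a)) * ∑ i ∈ Finset.range (k + 1), (l * a) ^ i / (Nat.factorial i : ℝ) := by
  have hk : ((Nat.factorial k : ℝ)) ≠ 0 := Nat.cast_ne_zero.2 (Nat.factorial_ne_zero k)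
  have hint : IntegrableOn
      (fun x : ℝ => -(l ^ (k + 1) * x ^ k * Real.exp (-(l * x)) / (Nat.factorial k : ℝ))) (Ioi a) := by
    have h := ((intOn_pow_exp k hl ha).const_mul (l ^ (k + 1) / (Nat.factorial k : ℝ))).neg
    refine IntegrableOn.congr_fun h (fun x _ => ?_) measurableSet_Ioi
    simp only [Pi.neg_apply]
    ring
  have h := integral_Ioi_of_hasDerivAt_of_tendsto' (fun x _ => hasDeriv_G k l x) hint (tendsto_G k hl)
  rw [integral_neg] at h
  have := neg_eq_iff_eq_neg.1 h
  rw [this]; ring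

lemma gammaCDF_le_one {m : ℕ} {l x : ℝ} (hl : 0 < l) (hx : 0 ≤ x) : gammaCDF m l x ≤ 1 := by
  unfold gammaCDF
  have h1 : 0 ≤ l * x := by positivity
  have h2 : 0 ≤ ∑ i ∈ Finset.range m, (l * x) ^ i / (Nat.factorial i : ℝ) :=
    Finset.sum_nonneg fun i _ => by positivity
  nlinarith [Real.exp_pos (-(l * x))]

lemma gammaCDF_nonneg {m : ℕ} {l x : ℝ} (hl : 0 < l) (hx : 0 ≤ x) : 0 ≤ gammaCDF m l x := by
  unfold gammaCDF
  have h1 : 0 ≤ l * x := by positivity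
  have h2 : ∑ i ∈ Finset.range m, (l * x) ^ i / (Nat.factorial i : ℝ) ≤ Real.exp (l * x) :=
    Real.sum_le_exp_of_nonneg h1 m
  have h3 : Real.exp (-(l * x)) * ∑ i ∈ Finset.range m, (l * x) ^ i / (Nat.factorial i : ℝ)
      ≤ Real.exp (-(l * x)) * Real.exp (l * x) :=
    mul_le_mul_of_nonneg_left h2 (Real.exp_pos _).le
  rw [← Real.exp_add, neg_add_cancel, Real.exp_zero] at h3
  linarith

lemma gammaCDF_zero {m : ℕ} (hm : 1 ≤ m) (l : ℝ) : gammaCDF m l 0 = 0 := by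
  unfold gammaCDF
  simp only [mul_zero, neg_zero, Real.exp_zero, one_mul]
  rw [Finset.sum_eq_single 0 (fun i _ hi => by simp [zero_pow hi])
    (fun h => absurd (Finset.mem_range.2 hm) h)]
  norm_num

lemma gammaLaw_apply (m : ℕ) (l : ℝ) {s : Set ℝ} (hs : MeasurableSet s) :
    gammaLaw m l s = ∫⁻ x in s, ENNReal.ofReal
      (if 0 < x then l ^ m * x ^ (m - 1) * Real.exp (-(l * x)) / Real.Gamma m else 0) :=
  withDensity_apply _ hs

lemma gammaLaw_Ioi {m : ℕ} (hm : 1 ≤ m) {l a : ℝ} (hl : 0 < l) (ha : 0 ≤ a) :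
    gammaLaw m l (Ioi a) = ENNReal.ofReal (1 - gammaCDF m l a) := by
  obtain ⟨k, rfl⟩ : ∃ k, m = k + 1 := ⟨m - 1, (Nat.succ_pred_eq_of_pos hm).symm⟩
  rw [gammaLaw_apply _ _ measurableSet_Ioi]
  have hΓ : Real.Gamma ((k : ℝ) + 1) = (Nat.factorial k : ℝ) := Real.Gamma_nat_eq_factorial k
  have heq : ∀ x ∈ Ioi a, ENNReal.ofReal
      (if 0 < x then l ^ (k + 1) * x ^ (k + 1 - 1) * Real.exp (-(l * x)) / Real.Gamma (↑(k + 1)) else 0)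
      = ENNReal.ofReal (l ^ (k + 1) * x ^ k * Real.exp (-(l * x)) / (Nat.factorial k : ℝ)) := by
    intro x hx
    rw [if_pos (lt_of_le_of_lt ha hx)]
    congr 1
    push_cast
    rw [hΓ]
  rw [setLIntegral_congr_fun measurableSet_Ioi heq]
  have hint : IntegrableOn
      (fun x : ℝ => l ^ (k + 1) * x ^ k * Real.exp (-(l * x)) / (Nat.factorial k : ℝ)) (Ioi a) := by
    have h := (intOn_pow_exp k hl ha).const_mul (l ^ (k + 1) / (Nat.factorial k : ℝ))
    refine IntegrableOn.congr_fun h (fun x _ => ?_) measurableSet_Ioi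
    ring
  have hnn : 0 ≤ᵐ[volume.restrict (Ioi a)]
      fun x : ℝ => l ^ (k + 1) * x ^ k * Real.exp (-(l * x)) / (Nat.factorial k : ℝ) := by
    refine (ae_restrict_iff' measurableSet_Ioi).2 (Filter.Eventually.of_forall fun x hx => ?_)
    have hx0 : (0:ℝ) ≤ x := le_trans ha (le_of_lt hx)
    positivity
  rw [← ofReal_integral_eq_lintegral_ofReal hint hnn, tail_integral k hl ha]
  congr 1
  simp only [gammaCDF]
  ring

lemma gammaLaw_isProb {m : ℕ} (hm : 1 ≤ m) {l : ℝ} (hl : 0 < l) :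
    IsProbabilityMeasure (gammaLaw m l) := by
  constructor
  have hunion : (Set.univ : Set ℝ) = Iic 0 ∪ Ioi 0 := (Set.Iic_union_Ioi).symm
  rw [hunion, measure_union (Set.Iic_disjoint_Ioi le_rfl) measurableSet_Ioi]
  have h0 : gammaLaw m l (Iic 0) = 0 := by
    rw [gammaLaw_apply _ _ measurableSet_Iic]
    rw [setLIntegral_congr_fun measurableSet_Iic (fun x hx => by
      rw [if_neg (not_lt.2 hx)])]
    simp
  rw [h0, zero_add, gammaLaw_Ioi hm hl le_rfl, gammaCDF_zero hm, sub_zero, ENNReal.ofReal_one]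

lemma gammaLaw_Iio {m : ℕ} (hm : 1 ≤ m) {l x : ℝ} (hl : 0 < l) (hx : 0 ≤ x) :
    gammaLaw m l (Iio x) = ENNReal.ofReal (gammaCDF m l x) := by
  haveI := gammaLaw_isProb hm hl
  have hsing : gammaLaw m l {x} = 0 :=
    (withDensity_absolutelyContinuous volume _) (measure_singleton x)
  have hIci : gammaLaw m l (Ici x) = ENNReal.ofReal (1 - gammaCDF m l x) := by
    rw [← gammaLaw_Ioi hm hl hx]
    refine le_antisymm ?_ (measure_mono Set.Ioi_subset_Ici_self)
    calc gammaLaw m l (Ici x) = gammaLaw m l ({x} ∪ Ioi x) := by rw [Set.singleton_union, Set.Ioi_insert]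
      _ ≤ gammaLaw m l {x} + gammaLaw m l (Ioi x) := measure_union_le _ _
      _ = gammaLaw m l (Ioi x) := by rw [hsing, zero_add]
  have hcompl := measure_compl (μ := gammaLaw m l) (measurableSet_Ici (a := x)) (measure_ne_top _ _)
  rw [Set.compl_Ici, hIci, measure_univ] at hcompl
  rw [hcompl]
  conv_rhs => rw [show gammaCDF m l x = 1 - (1 - gammaCDF m l x) by ring]
  rw [ENNReal.ofReal_sub _ (sub_nonneg.2 (gammaCDF_le_one hl hx)), ENNReal.ofReal_one]

end Stmt8Aux

open Stmt8Aux Set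

/-- Let m ≥ 1 be an integer, λ_B, λ_F > 0, and let G_B, G_F be independent Gamma
random variables with shape m and rates λ_B, λ_F respectively. For every a ≥ 0:
P(G_F < G_B and G_B > a)
  = 1 − F_B(a) − (λ_B^m/Γ(m)) Σ_{i=0}^{m−1} (λ_F^i/(i!·A2^{i+m})) Γ(i+m, A2·a),
where A2 = λ_B + λ_F and F_B is the CDF of G_B. -/
theorem stmt_8 {Ω : Type*} [MeasurableSpace Ω] (P : Measure Ω) [IsProbabilityMeasure P]
    (m : ℕ) (hm : 1 ≤ m) (lB lF : ℝ) (hlB : 0 < lB) (hlF : 0 < lF)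
    (GB GF : Ω → ℝ) (hGB : Measurable GB) (hGF : Measurable GF)
    (hBlaw : P.map GB = gammaLaw m lB) (hFlaw : P.map GF = gammaLaw m lF)
    (hindep : IndepFun GB GF P) :
    ∀ a : ℝ, 0 ≤ a →
      (P {ω | GF ω < GB ω ∧ a < GB ω}).toReal =
        1 - gammaCDF m lB a -
          lB ^ m / Real.Gamma m *
            ∑ i ∈ Finset.range m,
              lF ^ i / ((Nat.factorial i : ℝ) * (lB + lF) ^ (i + m)) *
                upperGamma (i + m) ((lB + lF) * a) := by
  intro a ha
  haveI hPB : IsProbabilityMeasure (gammaLaw m lB) := gammaLaw_isProb hm hlB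
  haveI hPF : IsProbabilityMeasure (gammaLaw m lF) := gammaLaw_isProb hm hlF
  have hA2 : 0 < lB + lF := by positivity
  have hm0 : (0 : ℝ) < (m : ℝ) := by exact_mod_cast hm
  have hΓpos : 0 < Real.Gamma (m : ℝ) := Real.Gamma_pos_of_pos hm0
  -- step 1: event probability as product measure
  have hS : MeasurableSet {p : ℝ × ℝ | p.2 < p.1 ∧ a < p.1} :=
    (measurableSet_lt measurable_snd measurable_fst).inter
      (measurableSet_lt measurable_const measurable_fst)
  have hmap : P.map (fun ω => (GB ω, GF ω)) = (gammaLaw m lB).prod (gammaLaw m lF) := by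
    rw [← hBlaw, ← hFlaw]
    exact (indepFun_iff_map_prod_eq_prod_map_map hGB.aemeasurable hGF.aemeasurable).mp hindep
  have hev : P {ω | GF ω < GB ω ∧ a < GB ω}
      = (gammaLaw m lB).prod (gammaLaw m lF) {p : ℝ × ℝ | p.2 < p.1 ∧ a < p.1} := by
    rw [← hmap, Measure.map_apply (hGB.prodMk hGF) hS]
    rfl
  rw [hev, Measure.prod_apply hS]
  -- step 2: inner measure as indicator
  have h1 : ∀ x : ℝ, gammaLaw m lF (Prod.mk x ⁻¹' {p : ℝ × ℝ | p.2 < p.1 ∧ a < p.1})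
      = (Ioi a).indicator (fun x => gammaLaw m lF (Iio x)) x := by
    intro x
    by_cases hx : a < x
    · rw [Set.indicator_of_mem (Set.mem_Ioi.2 hx)]
      congr 1
      ext y
      simp [hx]
    · rw [Set.indicator_of_notMem (fun h => hx (Set.mem_Ioi.1 h))]
      have he : Prod.mk x ⁻¹' {p : ℝ × ℝ | p.2 < p.1 ∧ a < p.1} = ∅ := by
        ext y; simp [hx]
      rw [he, measure_empty]
  simp only [h1]
  rw [lintegral_indicator measurableSet_Ioi]
  rw [setLIntegral_congr_fun measurableSet_Ioi (fun x hx =>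
    gammaLaw_Iio hm hlF (le_trans ha (le_of_lt hx)))]
  -- step 3: unfold density of gammaLaw m lB
  have hfB : Measurable (fun x : ℝ => ENNReal.ofReal
      (if 0 < x then lB ^ m * x ^ (m - 1) * Real.exp (-(lB * x)) / Real.Gamma m else 0)) := by
    apply ENNReal.measurable_ofReal.comp
    apply Measurable.ite (measurableSet_lt measurable_const measurable_id)
    · fun_prop
    · exact measurable_const
  have hg : Measurable (fun x : ℝ => ENNReal.ofReal (gammaCDF m lF x)) := by
    apply ENNReal.measurable_ofReal.comp
    unfold gammaCDF
    fun_prop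
  have hlint : ∫⁻ x in Ioi a, ENNReal.ofReal (gammaCDF m lF x) ∂(gammaLaw m lB)
      = ∫⁻ x in Ioi a, ENNReal.ofReal (dens m lB x * gammaCDF m lF x) := by
    rw [show gammaLaw m lB = volume.withDensity (fun x : ℝ => ENNReal.ofReal
      (if 0 < x then lB ^ m * x ^ (m - 1) * Real.exp (-(lB * x)) / Real.Gamma m else 0)) from rfl]
    rw [setLIntegral_withDensity_eq_setLIntegral_mul volume hfB hg measurableSet_Ioi]
    refine setLIntegral_congr_fun measurableSet_Ioi (fun x hx => ?_)
    have hx0 : (0 : ℝ) < x := lt_of_le_of_lt ha hx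
    simp only [Pi.mul_apply]
    rw [if_pos hx0, ← ENNReal.ofReal_mul]
    · rfl
    · exact div_nonneg (by positivity) hΓpos.le
  -- step 4: pointwise expansion of the integrand
  have hptw : ∀ x : ℝ, dens m lB x * gammaCDF m lF x
      = dens m lB x - ∑ i ∈ Finset.range m,
          lB ^ m * lF ^ i / (Real.Gamma m * (Nat.factorial i : ℝ))
            * (x ^ (i + m - 1) * Real.exp (-((lB + lF) * x))) := by
    intro x
    unfold dens gammaCDF
    rw [mul_sub, mul_one]
    congr 1
    rw [Finset.mul_sum, Finset.mul_sum]
    refine Finset.sum_congr rfl fun i _ => ?_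
    have hxp : x ^ (i + m - 1) = x ^ (m - 1) * x ^ i := by
      rw [← pow_add]
      congr 1
      omega
    have hexp : Real.exp (-((lB + lF) * x)) = Real.exp (-(lB * x)) * Real.exp (-(lF * x)) := by
      rw [← Real.exp_add]
      ring_nf
    rw [hxp, hexp, mul_pow]
    have hΓne : Real.Gamma (m : ℝ) ≠ 0 := hΓpos.ne'
    have hfne : ((Nat.factorial i : ℝ)) ≠ 0 := Nat.cast_ne_zero.2 (Nat.factorial_ne_zero i)
    field_simp
  have hfuneq : (fun x : ℝ => dens m lB x * gammaCDF m lF x)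
      = fun x : ℝ => dens m lB x - ∑ i ∈ Finset.range m,
          lB ^ m * lF ^ i / (Real.Gamma m * (Nat.factorial i : ℝ))
            * (x ^ (i + m - 1) * Real.exp (-((lB + lF) * x))) := funext hptw
  -- step 5: integrability
  have hDInt : IntegrableOn (fun x : ℝ => dens m lB x) (Ioi a) := by
    have h := (intOn_pow_exp (m - 1) hlB ha).const_mul (lB ^ m / Real.Gamma m)
    refine IntegrableOn.congr_fun h (fun x _ => ?_) measurableSet_Ioi
    unfold dens
    ring
  have hSumInt : IntegrableOn (fun x : ℝ => ∑ i ∈ Finset.range m,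
      lB ^ m * lF ^ i / (Real.Gamma m * (Nat.factorial i : ℝ))
        * (x ^ (i + m - 1) * Real.exp (-((lB + lF) * x)))) (Ioi a) :=
    integrable_finset_sum _ fun i _ => (intOn_pow_exp (i + m - 1) hA2 ha).const_mul _
  have hIntProd : IntegrableOn (fun x : ℝ => dens m lB x * gammaCDF m lF x) (Ioi a) := by
    rw [hfuneq]
    exact hDInt.sub hSumInt
  have hnnae : 0 ≤ᵐ[volume.restrict (Ioi a)] fun x : ℝ => dens m lB x * gammaCDF m lF x := by
    refine (ae_restrict_iff' measurableSet_Ioi).2 (Filter.Eventually.of_forall fun x hx => ?_)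
    have hx0 : (0 : ℝ) ≤ x := le_trans ha (le_of_lt hx)
    exact mul_nonneg (div_nonneg (by positivity) hΓpos.le) (gammaCDF_nonneg hlF hx0)
  rw [hlint, ← ofReal_integral_eq_lintegral_ofReal hIntProd hnnae,
    ENNReal.toReal_ofReal (integral_nonneg_of_ae hnnae)]
  -- step 6: compute the real integral
  rw [hfuneq, integral_sub hDInt hSumInt,
    integral_finset_sum _ fun i _ => (intOn_pow_exp (i + m - 1) hA2 ha).const_mul _]
  have hDval : ∫ x in Ioi a, dens m lB x = 1 - gammaCDF m lB a := by
    obtain ⟨k, hk⟩ : ∃ k, m = k + 1 := ⟨m - 1, (Nat.succ_pred_eq_of_pos hm).symm⟩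
    subst hk
    have hΓ : Real.Gamma ((k : ℝ) + 1) = (Nat.factorial k : ℝ) := Real.Gamma_nat_eq_factorial k
    have h1 : ∫ x in Ioi a, dens (k + 1) lB x
        = ∫ x in Ioi a, lB ^ (k + 1) * x ^ k * Real.exp (-(lB * x)) / (Nat.factorial k : ℝ) := by
      refine setIntegral_congr_fun measurableSet_Ioi fun x _ => ?_
      unfold dens
      push_cast
      rw [hΓ]
    rw [h1, tail_integral k hlB ha]
    simp only [gammaCDF]
    ring
  have hterm : ∀ i ∈ Finset.range m,
      (∫ x in Ioi a, lB ^ m * lF ^ i / (Real.Gamma m * (Nat.factorial i : ℝ))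
          * (x ^ (i + m - 1) * Real.exp (-((lB + lF) * x))))
      = lB ^ m * lF ^ i / (Real.Gamma m * (Nat.factorial i : ℝ))
          * (upperGamma ((i : ℝ) + (m : ℝ)) ((lB + lF) * a) / (lB + lF) ^ (i + m)) := by
    intro i _
    rw [integral_const_mul, integral_pow_exp (i + m - 1) hA2]
    rw [show (i + m - 1) + 1 = i + m from by omega,
      show ((i + m - 1 : ℕ) : ℝ) + 1 = (i : ℝ) + (m : ℝ) from by
        rw [Nat.cast_sub (by omega : 1 ≤ i + m)]; push_cast; ring]
  rw [hDval, Finset.sum_congr rfl hterm, Finset.mul_sum]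
  congr 1
  refine Finset.sum_congr rfl fun i _ => ?_
  push_cast
  ring
end

section
/- Let m ≥ 1 be an integer, λ_B, λ_F > 0, and let G_B, G_F be independent Gamma random variables with shape m and rates λ_B, λ_F respectively. Then P(G_F < G_B) = 1 − (λ_B^m/Γ(m)) · Σ_{i=0}^{m−1} λ_F^i · Γ(i+m) / (i! · (λ_B + λ_F)^{i+m}). -/
open MeasureTheory ProbabilityTheory Real Set

lemma aux_int_pow_exp (n : ℕ) {r : ℝ} (hr : 0 < r) :
    IntegrableOn (fun x : ℝ => x ^ n * Real.exp (-(r * x))) (Set.Ioi 0) := by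
  have h := integrableOn_rpow_mul_exp_neg_mul_rpow (p := 1) (s := (n : ℝ)) (b := r)
    (by exact_mod_cast neg_one_lt_zero.trans_le (Nat.cast_nonneg n)) zero_lt_one hr
  refine h.congr_fun (fun x hx => ?_) measurableSet_Ioi
  beta_reduce
  rw [Real.rpow_natCast, Real.rpow_one, neg_mul]

lemma aux_val_pow_exp (n : ℕ) {r : ℝ} (hr : 0 < r) :
    ∫ x in Set.Ioi (0:ℝ), x ^ n * Real.exp (-(r * x))
      = Real.Gamma (n + 1) / r ^ (n + 1) := by
  have h := integral_rpow_mul_exp_neg_mul_Ioi (a := (n : ℝ) + 1) (r := r)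
    (by positivity) hr
  simp only [add_sub_cancel_right] at h
  have h2 : ∫ x in Set.Ioi (0:ℝ), x ^ n * Real.exp (-(r * x))
      = ∫ t in Set.Ioi (0:ℝ), t ^ ((n : ℝ)) * Real.exp (-(r * t)) := by
    simp [Real.rpow_natCast]
  rw [h2, h, show ((n : ℝ) + 1) = ((n + 1 : ℕ) : ℝ) by push_cast; ring,
    Real.rpow_natCast, div_pow, one_pow]
  rw [div_mul_eq_mul_div, one_mul]

lemma aux_hasDerivAt (l : ℝ) (n : ℕ) (x : ℝ) :
    HasDerivAt
      (fun y => Real.exp (-(l * y)) *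
        ∑ k ∈ Finset.range (n + 1), (l * y) ^ k / (Nat.factorial k : ℝ))
      (-(l ^ (n + 1) * x ^ n * Real.exp (-(l * x)) / (Nat.factorial n : ℝ))) x := by
  induction n with
  | zero =>
      have h : HasDerivAt (fun y : ℝ => Real.exp (-(l * y)))
          (Real.exp (-(l * x)) * -(l * 1)) x :=
        (((hasDerivAt_id x).const_mul l).neg).exp
      have h2 : (fun y : ℝ => Real.exp (-(l * y)) *
          ∑ k ∈ Finset.range (0 + 1), (l * y) ^ k / (Nat.factorial k : ℝ))
          = fun y : ℝ => Real.exp (-(l * y)) := by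
        funext y; simp
      rw [h2]
      convert h using 1
      simp; ring
  | succ n ih =>
      have hexp : HasDerivAt (fun y : ℝ => Real.exp (-(l * y)))
          (Real.exp (-(l * x)) * -(l * 1)) x :=
        (((hasDerivAt_id x).const_mul l).neg).exp
      have hpow : HasDerivAt (fun y : ℝ => (l * y) ^ (n + 1) / (Nat.factorial (n+1) : ℝ))
          (((n + 1 : ℕ) : ℝ) * (l * x) ^ n * (l * 1) / (Nat.factorial (n+1) : ℝ)) x := by
        have := (((hasDerivAt_id x).const_mul l).pow (n + 1)).div_const
          ((Nat.factorial (n+1) : ℝ))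
        simpa using this
      have hcomb := ih.add (hexp.mul hpow)
      have heq : (fun y : ℝ => Real.exp (-(l * y)) *
          ∑ k ∈ Finset.range (n + 1 + 1), (l * y) ^ k / (Nat.factorial k : ℝ))
          = fun y : ℝ => (Real.exp (-(l * y)) *
            ∑ k ∈ Finset.range (n + 1), (l * y) ^ k / (Nat.factorial k : ℝ))
            + Real.exp (-(l * y)) * ((l * y) ^ (n + 1) / (Nat.factorial (n+1) : ℝ)) := by
        funext y; rw [Finset.sum_range_succ]; ring
      rw [heq]
      refine hcomb.congr_deriv ?_
      have hfac : ((Nat.factorial (n+1) : ℝ)) = ((n:ℝ) + 1) * (Nat.factorial n : ℝ) := by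
        rw [Nat.factorial_succ]; push_cast; ring
      have hne : (Nat.factorial n : ℝ) ≠ 0 := by
        exact_mod_cast Nat.factorial_ne_zero n
      have hne1 : ((n:ℝ) + 1) ≠ 0 := by positivity
      rw [hfac]
      push_cast
      field_simp
      ring

lemma aux_T_zero (l : ℝ) (n : ℕ) :
    Real.exp (-(l * 0)) *
      ∑ k ∈ Finset.range (n + 1), (l * 0) ^ k / (Nat.factorial k : ℝ) = 1 := by
  rw [Finset.sum_eq_single 0 (fun b _ hb => by simp [zero_pow hb]) (by simp)]
  simp

lemma aux_cdf (n : ℕ) {l : ℝ} (hl : 0 < l) (x : ℝ) :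
    gammaLaw (n + 1) l (Set.Iio x) =
      ENNReal.ofReal
        (if 0 < x then
          1 - Real.exp (-(l * x)) *
            ∑ k ∈ Finset.range (n + 1), (l * x) ^ k / (Nat.factorial k : ℝ)
        else 0) := by
  have hΓ : Real.Gamma ((n + 1 : ℕ) : ℝ) = (Nat.factorial n : ℝ) := by
    push_cast; exact_mod_cast Real.Gamma_nat_eq_factorial n
  have hΓpos : (0:ℝ) < Real.Gamma ((n + 1 : ℕ) : ℝ) := by
    rw [hΓ]; exact_mod_cast Nat.factorial_pos n
  rw [gammaLaw, withDensity_apply _ measurableSet_Iio]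
  by_cases hx : 0 < x
  · simp only [hx, if_true]
    have hsplit : Set.Iio x = Set.Iic 0 ∪ Set.Ioo 0 x := by
      ext y; simp only [mem_Iio, mem_union, mem_Iic, mem_Ioo]
      constructor
      · intro h; by_cases h0 : y ≤ 0
        · exact Or.inl h0
        · exact Or.inr ⟨lt_of_not_ge h0, h⟩
      · rintro (h | ⟨_, h⟩); exacts [lt_of_le_of_lt h hx, h]
    rw [hsplit, lintegral_union measurableSet_Ioo
      (by rw [Set.disjoint_left]; intro y hy hy2; exact absurd hy2.1 (not_lt.2 hy))]
    have hzero : ∫⁻ y in Set.Iic 0, ENNReal.ofReal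
        (if 0 < y then l ^ (n+1) * y ^ (n+1-1) * Real.exp (-(l * y)) / Real.Gamma ((n+1:ℕ):ℝ) else 0)
        = ∫⁻ _ in Set.Iic (0:ℝ), (0:ENNReal) :=
      setLIntegral_congr_fun measurableSet_Iic
        (fun y (hy : y ≤ 0) => by
          rw [if_neg (not_lt.2 hy), ENNReal.ofReal_zero])
    rw [hzero, lintegral_zero, zero_add]
    have hcongr : ∫⁻ y in Set.Ioo 0 x, ENNReal.ofReal
        (if 0 < y then l ^ (n+1) * y ^ (n+1-1) * Real.exp (-(l * y)) / Real.Gamma ((n+1:ℕ):ℝ) else 0)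
        = ∫⁻ y in Set.Ioo 0 x, ENNReal.ofReal
          (l ^ (n+1) * y ^ n * Real.exp (-(l * y)) / Real.Gamma ((n+1:ℕ):ℝ)) := by
      refine setLIntegral_congr_fun measurableSet_Ioo
        (fun y hy => ?_)
      rw [if_pos hy.1]
      norm_num
    rw [hcongr]
    set d : ℝ → ℝ := fun y => l ^ (n+1) * y ^ n * Real.exp (-(l * y)) / Real.Gamma ((n+1:ℕ):ℝ)
      with hd
    have hdc : Continuous d := by fun_prop
    have hint : IntegrableOn d (Set.Ioo 0 x) :=
      (hdc.integrableOn_Icc (a := 0) (b := x)).mono_set Set.Ioo_subset_Icc_self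
    rw [← ofReal_integral_eq_lintegral_ofReal hint
      ((ae_restrict_iff' measurableSet_Ioo).2 (Filter.Eventually.of_forall
        (fun y hy => by
          have := hy.1
          have hΓ' := hΓpos
          positivity)))]
    congr 1
    have h1 : ∫ y in Set.Ioo 0 x, d y = ∫ y in (0:ℝ)..x, d y := by
      rw [intervalIntegral.integral_of_le hx.le, integral_Ioc_eq_integral_Ioo]
    rw [h1]
    have hftc : ∫ y in (0:ℝ)..x, d y =
        (1 - Real.exp (-(l * x)) * ∑ k ∈ Finset.range (n + 1), (l * x) ^ k / (Nat.factorial k : ℝ))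
        - (1 - Real.exp (-(l * 0)) * ∑ k ∈ Finset.range (n + 1), (l * 0) ^ k / (Nat.factorial k : ℝ)) := by
      refine intervalIntegral.integral_eq_sub_of_hasDerivAt
        (f := fun t => 1 - Real.exp (-(l * t)) *
          ∑ k ∈ Finset.range (n + 1), (l * t) ^ k / (Nat.factorial k : ℝ))
        (fun y _ => ?_) (hdc.intervalIntegrable 0 x)
      have h := ((hasDerivAt_const y (1:ℝ)).sub (aux_hasDerivAt l n y))
      refine h.congr_deriv ?_
      rw [hd, hΓ]
      ring
    rw [hftc, aux_T_zero]
    ring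
  · rw [if_neg hx, ENNReal.ofReal_zero]
    have hzero : ∫⁻ y in Set.Iio x, ENNReal.ofReal
        (if 0 < y then l ^ (n+1) * y ^ (n+1-1) * Real.exp (-(l * y)) / Real.Gamma ((n+1:ℕ):ℝ) else 0)
        = ∫⁻ _ in Set.Iio x, (0:ENNReal) :=
      setLIntegral_congr_fun measurableSet_Iio
        (fun y (hy : y < x) => by
          rw [if_neg (not_lt.2 (hy.le.trans (not_lt.1 hx))), ENNReal.ofReal_zero])
    rw [hzero, lintegral_zero]

/-- Let m ≥ 1 be an integer, λ_B, λ_F > 0, and let G_B, G_F be independent Gamma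
random variables with shape m and rates λ_B, λ_F respectively. Then
P(G_F < G_B) = 1 − (λ_B^m/Γ(m)) Σ_{i=0}^{m−1} λ_F^i Γ(i+m)/(i!(λ_B + λ_F)^{i+m}). -/
theorem stmt_9 {Ω : Type*} [MeasurableSpace Ω] (P : Measure Ω) [IsProbabilityMeasure P]
    (m : ℕ) (hm : 1 ≤ m) (lB lF : ℝ) (hlB : 0 < lB) (hlF : 0 < lF)
    (GB GF : Ω → ℝ) (hGB : Measurable GB) (hGF : Measurable GF)
    (hBlaw : P.map GB = gammaLaw m lB) (hFlaw : P.map GF = gammaLaw m lF)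
    (hindep : IndepFun GB GF P) :
    (P {ω | GF ω < GB ω}).toReal =
      1 - lB ^ m / Real.Gamma m *
        ∑ i ∈ Finset.range m,
          lF ^ i * Real.Gamma (i + m) / ((Nat.factorial i : ℝ) * (lB + lF) ^ (i + m)) := by
  obtain ⟨n, rfl⟩ : ∃ n, m = n + 1 := ⟨m - 1, by omega⟩
  have hprobF : IsProbabilityMeasure (gammaLaw (n+1) lF) :=
    hFlaw ▸ Measure.isProbabilityMeasure_map hGF.aemeasurable
  have hΓ : Real.Gamma ((n + 1 : ℕ) : ℝ) = (Nat.factorial n : ℝ) := by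
    push_cast; exact_mod_cast Real.Gamma_nat_eq_factorial n
  have hΓpos : (0:ℝ) < Real.Gamma ((n + 1 : ℕ) : ℝ) := by
    rw [hΓ]; exact_mod_cast Nat.factorial_pos n
  have hsetm : MeasurableSet {p : ℝ × ℝ | p.2 < p.1} :=
    measurableSet_lt measurable_snd measurable_fst
  have hmap : P.map (fun ω => (GB ω, GF ω)) = (gammaLaw (n+1) lB).prod (gammaLaw (n+1) lF) := by
    rw [← hBlaw, ← hFlaw]
    exact (indepFun_iff_map_prod_eq_prod_map_map hGB.aemeasurable hGF.aemeasurable).1 hindep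
  have h1 : P {ω | GF ω < GB ω}
      = (P.map (fun ω => (GB ω, GF ω))) {p : ℝ × ℝ | p.2 < p.1} :=
    (Measure.map_apply (hGB.prodMk hGF) hsetm).symm
  rw [h1, hmap, Measure.prod_apply hsetm]
  -- abbreviations
  set TF : ℝ → ℝ := fun x => Real.exp (-(lF * x)) *
    ∑ k ∈ Finset.range (n + 1), (lF * x) ^ k / (Nat.factorial k : ℝ) with hTF
  set dB : ℝ → ℝ := fun x => lB ^ (n+1) * x ^ n * Real.exp (-(lB * x)) / Real.Gamma ((n+1:ℕ):ℝ)
    with hdB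
  have hpt : ∀ x : ℝ, gammaLaw (n+1) lF (Prod.mk x ⁻¹' {p : ℝ × ℝ | p.2 < p.1})
      = ENNReal.ofReal (if 0 < x then 1 - TF x else 0) := by
    intro x
    have hpre : Prod.mk x ⁻¹' {p : ℝ × ℝ | p.2 < p.1} = Set.Iio x := rfl
    rw [hpre, aux_cdf n hlF x]
  rw [lintegral_congr hpt]
  -- unfold withDensity for gammaLaw lB
  have hmeasg : Measurable fun x : ℝ => ENNReal.ofReal (if 0 < x then 1 - TF x else 0) := by
    apply Measurable.ennreal_ofReal
    apply Measurable.ite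
    · exact measurableSet_Ioi
    · fun_prop
    · exact measurable_const
  have hmeasf : Measurable fun x : ℝ => ENNReal.ofReal
      (if 0 < x then lB ^ (n+1) * x ^ (n+1-1) * Real.exp (-(lB * x)) / Real.Gamma ((n+1:ℕ):ℝ) else 0) := by
    apply Measurable.ennreal_ofReal
    apply Measurable.ite
    · exact measurableSet_Ioi
    · fun_prop
    · exact measurable_const
  rw [gammaLaw, lintegral_withDensity_eq_lintegral_mul volume hmeasf hmeasg]
  have hindi : ∀ x : ℝ,
      ((fun x : ℝ => ENNReal.ofReal
        (if 0 < x then lB ^ (n+1) * x ^ (n+1-1) * Real.exp (-(lB * x)) / Real.Gamma ((n+1:ℕ):ℝ) else 0))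
        * fun x : ℝ => ENNReal.ofReal (if 0 < x then 1 - TF x else 0)) x
      = (Set.Ioi (0:ℝ)).indicator (fun x => ENNReal.ofReal (dB x * (1 - TF x))) x := by
    intro x
    by_cases hx : 0 < x
    · simp only [Pi.mul_apply, if_pos hx, Set.indicator_of_mem (Set.mem_Ioi.2 hx)]
      rw [← ENNReal.ofReal_mul
        (div_nonneg (mul_nonneg (mul_nonneg (by positivity) (pow_nonneg hx.le _))
          (Real.exp_pos _).le) hΓpos.le)]
      congr 2
    · simp only [Pi.mul_apply, if_neg hx,
        Set.indicator_of_notMem (fun h => hx (Set.mem_Ioi.1 h))]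
      simp
  rw [lintegral_congr hindi, lintegral_indicator measurableSet_Ioi]
  -- expansion of the integrand as dB - sum
  have hexp2 : ∀ x : ℝ, Real.exp (-(lB * x)) * Real.exp (-(lF * x))
      = Real.exp (-((lB + lF) * x)) := by
    intro x; rw [← Real.exp_add]; ring_nf
  set e : ℕ → ℝ → ℝ := fun k x =>
    (lB ^ (n+1) * lF ^ k / (Real.Gamma ((n+1:ℕ):ℝ) * (Nat.factorial k : ℝ))) *
      (x ^ (n + k) * Real.exp (-((lB + lF) * x))) with he
  have hexpand : ∀ x : ℝ, dB x * (1 - TF x) = dB x - ∑ k ∈ Finset.range (n+1), e k x := by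
    intro x
    have : dB x * TF x = ∑ k ∈ Finset.range (n+1), e k x := by
      rw [hdB, hTF]
      simp only [Finset.mul_sum]
      refine Finset.sum_congr rfl (fun k _ => ?_)
      rw [he]
      simp only []
      rw [← hexp2 x]
      field_simp
      ring
    rw [mul_sub, mul_one, this]
  have hsumpos : (0:ℝ) < lB + lF := by linarith
  have hIB : IntegrableOn dB (Set.Ioi 0) := by
    have h0 : IntegrableOn (fun x : ℝ => (lB ^ (n+1) / Real.Gamma ((n+1:ℕ):ℝ)) *
        (x ^ n * Real.exp (-(lB * x)))) (Set.Ioi 0) :=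
      (aux_int_pow_exp n hlB).const_mul _
    refine IntegrableOn.congr_fun h0 (fun x _ => ?_) measurableSet_Ioi
    rw [hdB]; ring
  have hIe : ∀ k, IntegrableOn (e k) (Set.Ioi 0) := fun k =>
    (aux_int_pow_exp (n+k) hsumpos).const_mul _
  have hIsum : IntegrableOn (fun x => ∑ k ∈ Finset.range (n+1), e k x) (Set.Ioi 0) :=
    integrable_finset_sum _ (fun k _ => hIe k)
  have hIfull : IntegrableOn (fun x => dB x * (1 - TF x)) (Set.Ioi 0) := by
    refine IntegrableOn.congr_fun (hIB.sub hIsum) (fun x _ => ?_) measurableSet_Ioi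
    exact (hexpand x).symm
  have hT_le_one : ∀ x : ℝ, 0 < x → TF x ≤ 1 := by
    intro x hx
    rw [hTF]
    have h1 : ∑ k ∈ Finset.range (n + 1), (lF * x) ^ k / (Nat.factorial k : ℝ)
        ≤ Real.exp (lF * x) := Real.sum_le_exp_of_nonneg (by positivity) _
    calc Real.exp (-(lF * x)) * ∑ k ∈ Finset.range (n + 1), (lF * x) ^ k / (Nat.factorial k : ℝ)
        ≤ Real.exp (-(lF * x)) * Real.exp (lF * x) :=
          mul_le_mul_of_nonneg_left h1 (Real.exp_pos _).le
      _ = 1 := by rw [← Real.exp_add]; simp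
  have hnn : 0 ≤ᵐ[volume.restrict (Set.Ioi (0:ℝ))] fun x => dB x * (1 - TF x) := by
    refine (ae_restrict_iff' measurableSet_Ioi).2 (Filter.Eventually.of_forall (fun x hx => ?_))
    have h0 : 0 ≤ dB x := by rw [hdB]; have := hΓpos; have := Set.mem_Ioi.1 hx; positivity
    exact mul_nonneg h0 (by linarith [hT_le_one x (Set.mem_Ioi.1 hx)])
  rw [← ofReal_integral_eq_lintegral_ofReal hIfull hnn]
  have hJnn : 0 ≤ ∫ x in Set.Ioi (0:ℝ), dB x * (1 - TF x) :=
    setIntegral_nonneg measurableSet_Ioi (fun x hx =>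
      mul_nonneg (by rw [hdB]; have := hΓpos; have := Set.mem_Ioi.1 hx; positivity)
        (by linarith [hT_le_one x (Set.mem_Ioi.1 hx)]))
  rw [ENNReal.toReal_ofReal hJnn]
  -- compute the integral
  have hsplit : ∫ x in Set.Ioi (0:ℝ), dB x * (1 - TF x)
      = (∫ x in Set.Ioi (0:ℝ), dB x)
        - ∑ k ∈ Finset.range (n+1), ∫ x in Set.Ioi (0:ℝ), e k x := by
    rw [setIntegral_congr_fun measurableSet_Ioi (fun x _ => hexpand x),
      integral_sub hIB hIsum, integral_finset_sum _ (fun k _ => hIe k)]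
  rw [hsplit]
  have hdBval : ∫ x in Set.Ioi (0:ℝ), dB x = 1 := by
    have : ∫ x in Set.Ioi (0:ℝ), dB x
        = (lB ^ (n+1) / Real.Gamma ((n+1:ℕ):ℝ)) * ∫ x in Set.Ioi (0:ℝ), x ^ n * Real.exp (-(lB * x)) := by
      rw [← integral_const_mul]
      exact setIntegral_congr_fun measurableSet_Ioi (fun x _ => by rw [hdB]; ring)
    rw [this, aux_val_pow_exp n hlB]
    rw [show ((n:ℝ) + 1) = ((n + 1 : ℕ) : ℝ) by push_cast; ring]
    field_simp
  have heval : ∀ k, ∫ x in Set.Ioi (0:ℝ), e k x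
      = (lB ^ (n+1) * lF ^ k / (Real.Gamma ((n+1:ℕ):ℝ) * (Nat.factorial k : ℝ))) *
        (Real.Gamma (((n+k:ℕ):ℝ) + 1) / (lB + lF) ^ (n + k + 1)) := by
    intro k
    rw [he]
    simp only []
    rw [integral_const_mul, aux_val_pow_exp (n+k) hsumpos]
  rw [hdBval]
  have hsum_eq : ∑ k ∈ Finset.range (n+1), ∫ x in Set.Ioi (0:ℝ), e k x
      = lB ^ (n+1) / Real.Gamma ((n+1:ℕ):ℝ) *
        ∑ i ∈ Finset.range (n+1),
          lF ^ i * Real.Gamma ((i:ℝ) + ((n+1:ℕ):ℝ)) / ((Nat.factorial i : ℝ) * (lB + lF) ^ (i + (n+1))) := by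
    rw [Finset.mul_sum]
    refine Finset.sum_congr rfl (fun k _ => ?_)
    rw [heval k]
    have hΓeq : Real.Gamma (((n+k:ℕ):ℝ) + 1) = Real.Gamma ((k:ℝ) + ((n+1:ℕ):ℝ)) := by
      congr 1; push_cast; ring
    rw [hΓeq]
    have hpow : (lB + lF) ^ (n + k + 1) = (lB + lF) ^ (k + (n+1)) := by
      congr 1; omega
    rw [hpow]
    have hkne : (Nat.factorial k : ℝ) ≠ 0 := by exact_mod_cast Nat.factorial_ne_zero k
    have hpne : (lB + lF) ^ (k + (n+1)) ≠ 0 := by positivity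
    field_simp
  rw [hsum_eq]
end

section
/- Let m ≥ 1 be an integer, λ_B, λ_F > 0, and let G_B, G_F be independent Gamma random variables with shape m and rates λ_B, λ_F respectively, with CDFs F_B, F_F. Let ε1 > 0, ε2 > 0 and ε0 = ε1 + ε2. Then P(ε1 < G_B < ε0 and G_F < ε2·G_B/(G_B − ε1)) = F_B(ε0) − F_B(ε1) − (λ_B^m/Γ(m)) · Σ_{i=0}^{m−1} ((λ_F ε2)^i / i!) · ∫_{ε1}^{ε0} (y^{m+i−1}/(y − ε1)^i) · e^{−λ_B y − λ_F ε2 y/(y − ε1)} dy. -/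
open MeasureTheory ProbabilityTheory

set_option maxHeartbeats 1000000

lemma hasDerivAt_gammaCDF (m : ℕ) (hm : 1 ≤ m) (l t : ℝ) :
    HasDerivAt (fun x => gammaCDF m l x)
      (l ^ m * t ^ (m - 1) * Real.exp (-(l * t)) / Real.Gamma m) t := by
  obtain ⟨k, rfl⟩ : ∃ k, m = k + 1 := ⟨m - 1, (Nat.succ_pred_eq_of_pos hm).symm⟩
  have hlin : HasDerivAt (fun x : ℝ => l * x) l t := by
    simpa using (hasDerivAt_id t).const_mul l
  have hexp : HasDerivAt (fun x : ℝ => Real.exp (-(l * x))) (Real.exp (-(l * t)) * -l) t :=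
    hlin.neg.exp
  have hS : HasDerivAt (fun x : ℝ => ∑ i ∈ Finset.range (k + 1), (l * x) ^ i / (Nat.factorial i : ℝ))
      (∑ i ∈ Finset.range (k + 1), (i : ℝ) * (l * t) ^ (i - 1) * l / (Nat.factorial i : ℝ)) t := by
    apply HasDerivAt.fun_sum
    intro i _
    exact (hlin.pow i).div_const _
  have h := ((hexp.mul hS).const_sub 1)
  refine h.congr_deriv (Eq.symm ?_)
  have hsum : (∑ i ∈ Finset.range (k + 1), (i : ℝ) * (l * t) ^ (i - 1) * l / (Nat.factorial i : ℝ))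
      = l * ∑ i ∈ Finset.range k, (l * t) ^ i / (Nat.factorial i : ℝ) := by
    rw [Finset.sum_range_succ']
    simp only [Nat.cast_add, Nat.cast_one, Nat.add_sub_cancel, Nat.factorial_succ,
      Nat.cast_mul, Nat.cast_zero, Finset.mul_sum]
    rw [show ((0:ℝ) * (l*t)^(0-1) * l / (Nat.factorial 0 : ℝ)) = 0 by simp, add_zero]
    apply Finset.sum_congr rfl
    intro i _
    have : ((i:ℝ) + 1) ≠ 0 := by positivity
    field_simp
  rw [hsum, show ((k+1 : ℕ) : ℝ) = ((k:ℝ)+1) by push_cast; ring, Real.Gamma_nat_eq_factorial]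
  rw [Finset.sum_range_succ, mul_add, mul_comm (Real.exp _)]
  rw [Nat.add_sub_cancel]
  field_simp
  ring


lemma gammaCDF_zero (m : ℕ) (hm : 1 ≤ m) (l : ℝ) : gammaCDF m l 0 = 0 := by
  obtain ⟨k, rfl⟩ : ∃ k, m = k + 1 := ⟨m - 1, (Nat.succ_pred_eq_of_pos hm).symm⟩
  simp [gammaCDF, Finset.sum_range_succ']

lemma gammaCDF_nonneg (m : ℕ) (l x : ℝ) (h : 0 ≤ l * x) : 0 ≤ gammaCDF m l x := by
  have h1 : ∑ i ∈ Finset.range m, (l * x) ^ i / (Nat.factorial i : ℝ) ≤ Real.exp (l * x) :=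
    Real.sum_le_exp_of_nonneg h m
  have h2 : Real.exp (-(l * x)) * ∑ i ∈ Finset.range m, (l * x) ^ i / (Nat.factorial i : ℝ) ≤ 1 := by
    rw [Real.exp_neg]
    rw [inv_mul_le_iff₀ (Real.exp_pos _), mul_one]
    exact h1
  simpa [gammaCDF] using h2

lemma gammaCDF_le_one (m : ℕ) (l x : ℝ) (h : 0 ≤ l * x) : gammaCDF m l x ≤ 1 := by
  have : 0 ≤ Real.exp (-(l * x)) * ∑ i ∈ Finset.range m, (l * x) ^ i / (Nat.factorial i : ℝ) := by
    apply mul_nonneg (Real.exp_pos _).le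
    apply Finset.sum_nonneg
    intro i _
    positivity
  simp only [gammaCDF]
  linarith

lemma integral_gammaDensity (m : ℕ) (hm : 1 ≤ m) (l : ℝ) (a b : ℝ) (hab : a ≤ b) :
    ∫ x in Set.Ioo a b, l ^ m * x ^ (m - 1) * Real.exp (-(l * x)) / Real.Gamma m =
      gammaCDF m l b - gammaCDF m l a := by
  have hc : Continuous fun x : ℝ => l ^ m * x ^ (m - 1) * Real.exp (-(l * x)) / Real.Gamma m := by
    continuity
  rw [← integral_Ioc_eq_integral_Ioo, ← intervalIntegral.integral_of_le hab]
  exact intervalIntegral.integral_eq_sub_of_hasDerivAt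
    (fun x _ => hasDerivAt_gammaCDF m hm l x) (hc.intervalIntegrable a b)

lemma gammaLaw_Iio (m : ℕ) (hm : 1 ≤ m) (l : ℝ) (hl : 0 < l) (t : ℝ) (ht : 0 ≤ t) :
    gammaLaw m l (Set.Iio t) = ENNReal.ofReal (gammaCDF m l t) := by
  have hc : Continuous fun x : ℝ => l ^ m * x ^ (m - 1) * Real.exp (-(l * x)) / Real.Gamma m := by
    continuity
  have hmeas : Measurable fun x : ℝ =>
      ENNReal.ofReal (if 0 < x then l ^ m * x ^ (m - 1) * Real.exp (-(l * x)) / Real.Gamma m else 0) := by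
    apply Measurable.ennreal_ofReal
    exact Measurable.ite measurableSet_Ioi hc.measurable measurable_const
  have key : gammaLaw m l (Set.Iio t) =
      ∫⁻ x in Set.Iio t, ENNReal.ofReal
        (if 0 < x then l ^ m * x ^ (m - 1) * Real.exp (-(l * x)) / Real.Gamma m else 0) := by
    rw [gammaLaw, withDensity_apply _ measurableSet_Iio]
  rw [key]
  have hind : (fun x : ℝ => ENNReal.ofReal
      (if 0 < x then l ^ m * x ^ (m - 1) * Real.exp (-(l * x)) / Real.Gamma m else 0)) =
      (Set.Ioi (0:ℝ)).indicator
        (fun x => ENNReal.ofReal (l ^ m * x ^ (m - 1) * Real.exp (-(l * x)) / Real.Gamma m)) := by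
    funext x
    by_cases hx : 0 < x
    · simp [Set.indicator_of_mem, hx]
    · simp [Set.indicator_of_notMem, hx]
  rw [hind, setLIntegral_indicator measurableSet_Ioi]
  have : Set.Ioi (0:ℝ) ∩ Set.Iio t = Set.Ioo 0 t := by
    ext x; simp [and_comm]
  rw [this]
  have hint : IntegrableOn (fun x : ℝ => l ^ m * x ^ (m - 1) * Real.exp (-(l * x)) / Real.Gamma m)
      (Set.Ioo 0 t) volume := by
    rw [← integrableOn_Ioc_iff_integrableOn_Ioo]
    exact hc.integrableOn_Ioc
  have hnn : 0 ≤ᵐ[volume.restrict (Set.Ioo 0 t)]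
      fun x : ℝ => l ^ m * x ^ (m - 1) * Real.exp (-(l * x)) / Real.Gamma m := by
    refine (ae_restrict_iff' measurableSet_Ioo).mpr (ae_of_all _ fun x hx => ?_)
    have hΓ : 0 < Real.Gamma m := Real.Gamma_pos_of_pos (by exact_mod_cast hm)
    have := hx.1
    positivity
  rw [← ofReal_integral_eq_lintegral_ofReal hint hnn,
    integral_gammaDensity m hm l 0 t ht, gammaCDF_zero m hm l, sub_zero]


lemma pow_exp_le_factorial (i : ℕ) (s : ℝ) (hs : 0 ≤ s) :
    s ^ i * Real.exp (-s) ≤ (Nat.factorial i : ℝ) := by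
  have h1 : s ^ i / (Nat.factorial i : ℝ) ≤ Real.exp s := by
    calc s ^ i / (Nat.factorial i : ℝ)
        ≤ ∑ j ∈ Finset.range (i + 1), s ^ j / (Nat.factorial j : ℝ) := by
          refine Finset.single_le_sum (f := fun j => s ^ j / (Nat.factorial j : ℝ))
            (fun j _ => by positivity) (Finset.self_mem_range_succ i)
      _ ≤ Real.exp s := Real.sum_le_exp_of_nonneg hs _
  have hfac : (0:ℝ) < (Nat.factorial i : ℝ) := by positivity
  rw [div_le_iff₀ hfac] at h1
  rw [Real.exp_neg, mul_inv_le_iff₀ (Real.exp_pos s)]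
  nlinarith [Real.exp_pos s, hfac.le]


/-- Let m ≥ 1 be an integer, λ_B, λ_F > 0, and let G_B, G_F be independent Gamma
random variables with shape m and rates λ_B, λ_F respectively, with CDFs F_B, F_F. Let ε1 > 0,
ε2 > 0 and ε0 = ε1 + ε2. Then
P(ε1 < G_B < ε0 and G_F < ε2·G_B/(G_B − ε1))
  = F_B(ε0) − F_B(ε1) − (λ_B^m/Γ(m)) Σ_{i=0}^{m−1} ((λ_F ε2)^i/i!)
      ∫_{ε1}^{ε0} y^{m+i−1}/(y − ε1)^i · e^{−λ_B y − λ_F ε2 y/(y − ε1)} dy. -/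
theorem stmt_11 {Ω : Type*} [MeasurableSpace Ω] (P : Measure Ω) [IsProbabilityMeasure P]
    (m : ℕ) (hm : 1 ≤ m) (lB lF : ℝ) (hlB : 0 < lB) (hlF : 0 < lF)
    (GB GF : Ω → ℝ) (hGB : Measurable GB) (hGF : Measurable GF)
    (hBlaw : P.map GB = gammaLaw m lB) (hFlaw : P.map GF = gammaLaw m lF)
    (hindep : IndepFun GB GF P)
    (ε1 ε2 : ℝ) (hε1 : 0 < ε1) (hε2 : 0 < ε2) :
    (P {ω | ε1 < GB ω ∧ GB ω < ε1 + ε2 ∧ GF ω < ε2 * GB ω / (GB ω - ε1)}).toReal =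
      gammaCDF m lB (ε1 + ε2) - gammaCDF m lB ε1 -
        lB ^ m / Real.Gamma m *
          ∑ i ∈ Finset.range m,
            (lF * ε2) ^ i / (Nat.factorial i : ℝ) *
              ∫ y in ε1..(ε1 + ε2),
                y ^ (m + i - 1) / (y - ε1) ^ i *
                  Real.exp (-(lB * y) - lF * ε2 * y / (y - ε1)) := by
  set ε0 := ε1 + ε2 with hε0
  have hΓ : 0 < Real.Gamma m := Real.Gamma_pos_of_pos (by exact_mod_cast hm)
  set g : ℝ → ℝ := fun x => ε2 * x / (x - ε1) with hg
  have hgmeas : Measurable g := (measurable_const.mul measurable_id).div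
    (measurable_id.sub measurable_const)
  set S : Set (ℝ × ℝ) := {p | ε1 < p.1 ∧ p.1 < ε0 ∧ p.2 < g p.1} with hSdef
  have hS : MeasurableSet S := by
    apply MeasurableSet.inter (measurableSet_lt measurable_const measurable_fst)
    exact (measurableSet_lt measurable_fst measurable_const).inter
      (measurableSet_lt measurable_snd (hgmeas.comp measurable_fst))
  haveI hsf : SFinite (gammaLaw m lF) := Measure.withDensity.instSFinite
  have hmap : P.map (fun ω => (GB ω, GF ω)) = (gammaLaw m lB).prod (gammaLaw m lF) := by
    rw [← hBlaw, ← hFlaw]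
    exact (indepFun_iff_map_prod_eq_prod_map_map hGB.aemeasurable hGF.aemeasurable).mp hindep
  have hPA : P {ω | ε1 < GB ω ∧ GB ω < ε0 ∧ GF ω < ε2 * GB ω / (GB ω - ε1)} =
      ((gammaLaw m lB).prod (gammaLaw m lF)) S := by
    rw [← hmap, Measure.map_apply (hGB.prodMk hGF) hS]
    rfl
  rw [hPA]
  -- Fubini step
  have hprod : ((gammaLaw m lB).prod (gammaLaw m lF)) S =
      ∫⁻ x in Set.Ioo ε1 ε0, ENNReal.ofReal (gammaCDF m lF (g x)) ∂(gammaLaw m lB) := by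
    rw [Measure.prod_apply hS]
    rw [← lintegral_indicator measurableSet_Ioo]
    congr 1
    funext x
    by_cases hx : x ∈ Set.Ioo ε1 ε0
    · have hpre : Prod.mk x ⁻¹' S = Set.Iio (g x) := by
        ext y
        simp only [Set.mem_preimage, hSdef, Set.mem_setOf_eq, Set.mem_Iio]
        exact ⟨fun h => h.2.2, fun h => ⟨hx.1, hx.2, h⟩⟩
      rw [Set.indicator_of_mem hx, hpre]
      have hgpos : 0 ≤ g x := by
        have h1 : 0 < x - ε1 := by simp [Set.mem_Ioo] at hx; linarith [hx.1]
        have h2 : 0 < x := lt_trans hε1 hx.1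
        positivity
      exact gammaLaw_Iio m hm lF hlF (g x) hgpos
    · have hpre : Prod.mk x ⁻¹' S = ∅ := by
        ext y
        simp only [Set.mem_preimage, hSdef, Set.mem_setOf_eq, Set.mem_empty_iff_false, iff_false]
        intro h
        exact hx ⟨h.1, h.2.1⟩
      rw [Set.indicator_of_notMem hx, hpre, measure_empty]
  rw [hprod]
  -- unfold density of gammaLaw m lB
  set fB : ℝ → ℝ := fun x => lB ^ m * x ^ (m - 1) * Real.exp (-(lB * x)) / Real.Gamma m with hfB
  have hfBc : Continuous fB := by simp only [hfB]; continuity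
  have hFcont : Continuous fun x : ℝ => gammaCDF m lF x := by
    unfold gammaCDF
    continuity
  have hφmeas : Measurable fun x : ℝ => ENNReal.ofReal (gammaCDF m lF (g x)) :=
    ((hFcont.measurable).comp hgmeas).ennreal_ofReal
  set φr : ℝ → ℝ := fun x => fB x * gammaCDF m lF (g x) with hφr
  have hdBmeas : Measurable fun x : ℝ => ENNReal.ofReal
      (if 0 < x then lB ^ m * x ^ (m - 1) * Real.exp (-(lB * x)) / Real.Gamma m else 0) := by
    apply Measurable.ennreal_ofReal
    exact Measurable.ite measurableSet_Ioi hfBc.measurable measurable_const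
  have hlin1 : ∫⁻ x in Set.Ioo ε1 ε0, ENNReal.ofReal (gammaCDF m lF (g x)) ∂(gammaLaw m lB)
      = ∫⁻ x in Set.Ioo ε1 ε0, ENNReal.ofReal (φr x) := by
    rw [gammaLaw, restrict_withDensity measurableSet_Ioo,
      lintegral_withDensity_eq_lintegral_mul _ hdBmeas hφmeas]
    refine setLIntegral_congr_fun measurableSet_Ioo (fun x hx => ?_)
    have hx0 : 0 < x := lt_trans hε1 hx.1
    simp only [Pi.mul_apply, if_pos hx0, hφr]
    rw [← ENNReal.ofReal_mul (by positivity)]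
  rw [hlin1]
  -- nonnegativity and integrability of φr
  have hgx : ∀ x ∈ Set.Ioo ε1 ε0, 0 ≤ lF * g x := by
    intro x hx
    have h1 : 0 < x - ε1 := by linarith [hx.1]
    have h2 : 0 < x := lt_trans hε1 hx.1
    have : 0 ≤ g x := by simp only [hg]; positivity
    positivity
  have hφnn : 0 ≤ᵐ[volume.restrict (Set.Ioo ε1 ε0)] φr := by
    refine (ae_restrict_iff' measurableSet_Ioo).mpr (ae_of_all _ fun x hx => ?_)
    have hx0 : 0 < x := lt_trans hε1 hx.1
    have h1 : 0 ≤ fB x := by simp only [hfB]; positivity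
    exact mul_nonneg h1 (gammaCDF_nonneg m lF (g x) (hgx x hx))
  have hφmeas' : Measurable φr := hfBc.measurable.mul ((hFcont.measurable).comp hgmeas)
  have hφint : IntegrableOn φr (Set.Ioo ε1 ε0) volume := by
    refine Integrable.mono' (g := fun _ => lB ^ m * ε0 ^ (m - 1) / Real.Gamma m)
      (integrableOn_const measure_Ioo_lt_top.ne)
      hφmeas'.aestronglyMeasurable ?_
    refine (ae_restrict_iff' measurableSet_Ioo).mpr (ae_of_all _ fun x hx => ?_)
    have hx0 : 0 < x := lt_trans hε1 hx.1
    have h1 : 0 ≤ fB x := by simp only [hfB]; positivity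
    have h2 : 0 ≤ gammaCDF m lF (g x) := gammaCDF_nonneg m lF (g x) (hgx x hx)
    rw [Real.norm_eq_abs, abs_of_nonneg (mul_nonneg h1 h2)]
    have h3 : gammaCDF m lF (g x) ≤ 1 := gammaCDF_le_one m lF (g x) (hgx x hx)
    have hexp : Real.exp (-(lB * x)) ≤ 1 := by
      rw [Real.exp_le_one_iff]
      nlinarith
    have h4 : fB x ≤ lB ^ m * ε0 ^ (m - 1) / Real.Gamma m := by
      simp only [hfB]
      calc lB ^ m * x ^ (m - 1) * Real.exp (-(lB * x)) / Real.Gamma m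
          ≤ lB ^ m * ε0 ^ (m - 1) * 1 / Real.Gamma m := by
            gcongr
            exact hx.2.le
        _ = lB ^ m * ε0 ^ (m - 1) / Real.Gamma m := by ring
    calc fB x * gammaCDF m lF (g x) ≤ fB x * 1 :=
          mul_le_mul_of_nonneg_left h3 h1
      _ = fB x := mul_one _
      _ ≤ lB ^ m * ε0 ^ (m - 1) / Real.Gamma m := h4
  have htoReal : (∫⁻ x in Set.Ioo ε1 ε0, ENNReal.ofReal (φr x)).toReal
      = ∫ x in Set.Ioo ε1 ε0, φr x := by
    rw [← ofReal_integral_eq_lintegral_ofReal hφint hφnn,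
      ENNReal.toReal_ofReal (integral_nonneg_of_ae hφnn)]
  rw [htoReal]
  -- integrand functions
  set h : ℕ → ℝ → ℝ := fun i x => x ^ (m + i - 1) / (x - ε1) ^ i *
    Real.exp (-(lB * x) - lF * ε2 * x / (x - ε1)) with hh
  -- pointwise identity on Ioo
  have hpt : Set.EqOn φr (fun x => fB x - ∑ i ∈ Finset.range m,
      lB ^ m / Real.Gamma m * ((lF * ε2) ^ i / (Nat.factorial i : ℝ) * h i x))
      (Set.Ioo ε1 ε0) := by
    intro x hx
    have hu : 0 < x - ε1 := by have := hx.1; simp only [Set.mem_Ioo] at hx; linarith [hx.1]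
    have hx0 : 0 < x := lt_trans hε1 hx.1
    simp only [hφr, gammaCDF]
    rw [mul_sub, mul_one, Finset.mul_sum, Finset.mul_sum]
    congr 1
    apply Finset.sum_congr rfl
    intro i _
    have e1 : lF * g x = lF * ε2 * x / (x - ε1) := by simp only [hg]; ring
    have e2 : Real.exp (-(lB * x) - lF * ε2 * x / (x - ε1)) =
        Real.exp (-(lB * x)) * Real.exp (-(lF * ε2 * x / (x - ε1))) := by
      rw [← Real.exp_add]; ring_nf
    have e3 : x ^ (m + i - 1) = x ^ (m - 1) * x ^ i := by
      rw [← pow_add]; congr 1; omega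
    simp only [hh, hfB]
    rw [e2, e3]
    rw [show Real.exp (-(lF * g x)) = Real.exp (-(lF * ε2 * x / (x - ε1))) by rw [e1]]
    have hfne : ((Nat.factorial i : ℝ)) ≠ 0 := by positivity
    rw [e1]
    rw [div_pow]
    field_simp
    ring
  rw [setIntegral_congr_fun measurableSet_Ioo hpt]
  -- integrability of pieces
  have hfBint : IntegrableOn fB (Set.Ioo ε1 ε0) volume := by
    rw [← integrableOn_Ioc_iff_integrableOn_Ioo]
    exact hfBc.integrableOn_Ioc
  have hhmeas : ∀ i : ℕ, Measurable (h i) := by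
    intro i
    simp only [hh]
    fun_prop
  have hhint : ∀ i : ℕ, IntegrableOn (h i) (Set.Ioo ε1 ε0) volume := by
    intro i
    refine Integrable.mono'
      (g := fun _ => ε0 ^ (m - 1) * (Nat.factorial i : ℝ) / (lF * ε2) ^ i)
      (integrableOn_const measure_Ioo_lt_top.ne)
      (hhmeas i).aestronglyMeasurable ?_
    refine (ae_restrict_iff' measurableSet_Ioo).mpr (ae_of_all _ fun x hx => ?_)
    have hu : 0 < x - ε1 := by simp only [Set.mem_Ioo] at hx; linarith [hx.1]
    have hx0 : 0 < x := lt_trans hε1 hx.1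
    have hs0 : 0 ≤ lF * ε2 * x / (x - ε1) := by positivity
    have e2 : Real.exp (-(lB * x) - lF * ε2 * x / (x - ε1)) =
        Real.exp (-(lB * x)) * Real.exp (-(lF * ε2 * x / (x - ε1))) := by
      rw [← Real.exp_add]; ring_nf
    have e3 : x ^ (m + i - 1) = x ^ (m - 1) * x ^ i := by
      rw [← pow_add]; congr 1; omega
    have key : h i x = (x ^ (m - 1) * Real.exp (-(lB * x))) *
        ((lF * ε2 * x / (x - ε1)) ^ i * Real.exp (-(lF * ε2 * x / (x - ε1)))) / (lF * ε2) ^ i := by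
      simp only [hh]
      rw [e2, e3]
      rw [div_pow]
      field_simp
      ring
    rw [Real.norm_eq_abs, key, abs_of_nonneg (by positivity)]
    have b1 : x ^ (m - 1) * Real.exp (-(lB * x)) ≤ ε0 ^ (m - 1) * 1 := by
      have hexp : Real.exp (-(lB * x)) ≤ 1 := by
        rw [Real.exp_le_one_iff]; nlinarith
      gcongr
      exact hx.2.le
    have b2 : (lF * ε2 * x / (x - ε1)) ^ i * Real.exp (-(lF * ε2 * x / (x - ε1)))
        ≤ (Nat.factorial i : ℝ) := pow_exp_le_factorial i _ hs0
    calc (x ^ (m - 1) * Real.exp (-(lB * x))) *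
          ((lF * ε2 * x / (x - ε1)) ^ i * Real.exp (-(lF * ε2 * x / (x - ε1)))) / (lF * ε2) ^ i
        ≤ (ε0 ^ (m - 1) * 1) * (Nat.factorial i : ℝ) / (lF * ε2) ^ i := by
          gcongr <;> first | exact b1 | exact b2 | positivity
      _ = ε0 ^ (m - 1) * (Nat.factorial i : ℝ) / (lF * ε2) ^ i := by ring
  have htermint : ∀ i ∈ Finset.range m, IntegrableOn
      (fun x => lB ^ m / Real.Gamma m * ((lF * ε2) ^ i / (Nat.factorial i : ℝ) * h i x))
      (Set.Ioo ε1 ε0) volume := by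
    intro i _
    exact (((hhint i).const_mul _).const_mul _)
  -- split the integral
  rw [integral_sub hfBint (integrable_finset_sum _ htermint), integral_finset_sum _ htermint]
  have hfBval : ∫ x in Set.Ioo ε1 ε0, fB x = gammaCDF m lB ε0 - gammaCDF m lB ε1 := by
    simp only [hfB]
    exact integral_gammaDensity m hm lB ε1 ε0 (by simp only [hε0]; linarith)
  rw [hfBval]
  have hiv : ∀ i : ℕ, (∫ y in ε1..ε0, h i y) = ∫ x in Set.Ioo ε1 ε0, h i x := by
    intro i
    rw [intervalIntegral.integral_of_le (by simp only [hε0]; linarith),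
      integral_Ioc_eq_integral_Ioo]
  have hsum : ∑ i ∈ Finset.range m, ∫ x in Set.Ioo ε1 ε0,
      lB ^ m / Real.Gamma m * ((lF * ε2) ^ i / (Nat.factorial i : ℝ) * h i x)
      = lB ^ m / Real.Gamma m * ∑ i ∈ Finset.range m,
        (lF * ε2) ^ i / (Nat.factorial i : ℝ) * ∫ y in ε1..ε0, h i y := by
    rw [Finset.mul_sum]
    apply Finset.sum_congr rfl
    intro i _
    rw [MeasureTheory.integral_const_mul, MeasureTheory.integral_const_mul, hiv i]
  rw [hsum]
end

section
/- Let ρ > 0, Θ_B > 1 and ε1 = (Θ_B − 1)/ρ. Let g_B > ε1 and ε1 < g_F < g_B. Set ω̄ = (ρg_B − (Θ_B − 1))/(ρΘ_B g_B), ω = 1 − ω̄, and ω̄₂ = (ρg_F − (Θ_B − 1))/(ρΘ_B g_F). Then log₂(1 + ρω̄g_F/(1 + ρωg_F)) < log₂(1 + ρω̄₂g_F) if and only if g_F > Θ_B g_B/(ρg_B + 1). Moreover, Θ_B g_B/(ρg_B + 1) > ε1 whenever g_B > ε1. -/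
/-- Let ρ > 0, Θ_B > 1 and ε1 = (Θ_B − 1)/ρ. Let g_B > ε1 and ε1 < g_F < g_B.
Set ω̄ = (ρg_B − (Θ_B − 1))/(ρΘ_B g_B), ω = 1 − ω̄, and ω̄₂ = (ρg_F − (Θ_B − 1))/(ρΘ_B g_F).
Then log₂(1 + ρω̄g_F/(1 + ρωg_F)) < log₂(1 + ρω̄₂g_F) iff g_F > Θ_B g_B/(ρg_B + 1).
Moreover, Θ_B g_B/(ρg_B + 1) > ε1 whenever g_B > ε1. -/
theorem stmt_13 (ρ ΘB gB gF : ℝ) (hρ : 0 < ρ) (hΘB : 1 < ΘB)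
    (hgB : (ΘB - 1) / ρ < gB) (hgF1 : (ΘB - 1) / ρ < gF) (hgF2 : gF < gB) :
    (Real.logb 2 (1 + ρ * ((ρ * gB - (ΘB - 1)) / (ρ * ΘB * gB)) * gF /
        (1 + ρ * (1 - (ρ * gB - (ΘB - 1)) / (ρ * ΘB * gB)) * gF)) <
      Real.logb 2 (1 + ρ * ((ρ * gF - (ΘB - 1)) / (ρ * ΘB * gF)) * gF) ↔
        ΘB * gB / (ρ * gB + 1) < gF) ∧
    ∀ g : ℝ, (ΘB - 1) / ρ < g → (ΘB - 1) / ρ < ΘB * g / (ρ * g + 1) := by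
  have ht : 0 < ΘB - 1 := by linarith
  have hρgB : ΘB - 1 < ρ * gB := by
    rw [div_lt_iff₀ hρ] at hgB; linarith [hgB]
  have hρgF : ΘB - 1 < ρ * gF := by
    rw [div_lt_iff₀ hρ] at hgF1; linarith [hgF1]
  have hgB0 : 0 < gB := by nlinarith
  have hgF0 : 0 < gF := by nlinarith
  have hdB : 0 < ρ * ΘB * gB := by positivity
  have hdF : 0 < ρ * ΘB * gF := by positivity
  have hden1 : 0 < ρ * gB + 1 := by positivity
  have hωbar : ρ * gB - (ΘB - 1) < ρ * ΘB * gB := by nlinarith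
  have hω : 0 < 1 + ρ * (1 - (ρ * gB - (ΘB - 1)) / (ρ * ΘB * gB)) * gF := by
    have : (ρ * gB - (ΘB - 1)) / (ρ * ΘB * gB) < 1 := (div_lt_one hdB).mpr hωbar
    nlinarith
  have hA : 0 < 1 + ρ * ((ρ * gB - (ΘB - 1)) / (ρ * ΘB * gB)) * gF /
      (1 + ρ * (1 - (ρ * gB - (ΘB - 1)) / (ρ * ΘB * gB)) * gF) := by
    have h1 : 0 < (ρ * gB - (ΘB - 1)) / (ρ * ΘB * gB) := by
      apply div_pos (by linarith) hdB
    positivity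
  have hB : 0 < 1 + ρ * ((ρ * gF - (ΘB - 1)) / (ρ * ΘB * gF)) * gF := by
    have h1 : 0 < (ρ * gF - (ΘB - 1)) / (ρ * ΘB * gF) := by
      apply div_pos (by linarith) hdF
    positivity
  constructor
  · rw [Real.logb_lt_logb_iff (by norm_num) hA hB, add_lt_add_iff_left]
    rw [div_lt_iff₀ hω, div_lt_iff₀ hden1]
    have hne : ρ * ΘB * gB ≠ 0 := ne_of_gt hdB
    have hne2 : ρ * ΘB * gF ≠ 0 := ne_of_gt hdF
    rw [div_lt_iff₀ hρ] at hgB hgF1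
    have hC : 0 < (ρ * ΘB * gB) * (ρ^2 * gF) * (ΘB - 1) * (ρ * gF + 1) := by positivity
    have key : ρ * (ρ * gF - (ΘB - 1)) * gF *
          (ρ * ΘB * gB + ρ * (ρ * ΘB * gB - (ρ * gB - (ΘB - 1))) * gF) * (ρ * ΘB * gB) -
        ρ * ΘB * gF * (ρ * ΘB * gB) * (ρ * (ρ * gB - (ΘB - 1)) * gF) =
        (ρ * ΘB * gB) * (ρ^2 * gF) * (ΘB - 1) * (ρ * gF + 1) *
          (gF * (ρ * gB + 1) - ΘB * gB) := by ring
    constructor <;> intro h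
    · rw [← sub_pos] ; rw [← sub_pos] at h
      field_simp at h
      by_contra h'
      push_neg at h'
      have := mul_nonpos_of_nonneg_of_nonpos hC.le (by linarith : gF * (ρ * gB + 1) - ΘB * gB ≤ 0)
      have hE := mul_pos (by positivity : (0:ℝ) < ρ^3 * ΘB * gB * gF) (by linarith [h] : (0:ℝ) < ((ρ * gF - (ΘB - 1)) * (ΘB * gB + gF * (ρ * ΘB * gB - (ρ * gB - (ΘB - 1)))) - gF * ΘB * (ρ * gB - (ΘB - 1))))
      linarith
    · rw [← sub_pos] at h ⊢
      field_simp
      have := mul_pos hC h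
      have hE : (0:ℝ) < ((ρ * gF - (ΘB - 1)) * (ΘB * gB + gF * (ρ * ΘB * gB - (ρ * gB - (ΘB - 1)))) - gF * ΘB * (ρ * gB - (ΘB - 1))) := by
        by_contra hc
        push_neg at hc
        have := mul_nonpos_of_nonneg_of_nonpos (by positivity : (0:ℝ) ≤ ρ^3 * ΘB * gB * gF) hc
        linarith
      linarith
  · intro g hg
    have hg0 : 0 < g := lt_trans (by positivity) hg
    rw [div_lt_div_iff₀ hρ (by positivity)]
    rw [div_lt_iff₀ hρ] at hg
    nlinarith
end

section
/- Assume ρ > 0, Θ_B > 1 and 1 < Θ_th < Θ_B/(Θ_B − 1). With ε1 = (Θ_B − 1)/ρ, ε2 = Θ_B(Θ_th − 1)/ρ, ε0 = ε1 + ε2, ε3 = (Θ_B − 1)Θ_th/(ρ(Θ_th − (Θ_th − 1)Θ_B)), ε4 = Θ_B(Θ_th − 1)/(ρ(Θ_B − Θ_th(Θ_B − 1))), ε5 = ε3 + ε4, and the FPA grant-free rate R_F(g_B, g_F) defined below, the following holds for independent Gamma random variables G_B, G_F with integer shape m ≥ 1 and rates λ_B, λ_F > 0: P(G_B ≤ ε1)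 + P(G_B > ε1 and R_F(G_B, G_F) < log₂ Θ_th) = P(G_B ≤ ε1) + P(ε1 < G_B < ε0 and G_B < G_F < ε2 G_B/(G_B − ε1)) + P(G_F < G_B and ε1 < G_B < ε5) + P(G_B > ε5 and G_F < ε4 G_B/(G_B − ε3)). -/
open MeasureTheory ProbabilityTheory

/-- The FPA power allocation coefficient of the grant-based user:
ω(g_B) = min{(ρg_B + 1)(Θ_B − 1)/(ρg_B Θ_B), 1}. -/
noncomputable def omegaFPA (ρ ΘB gB : ℝ) : ℝ :=
  min ((ρ * gB + 1) * (ΘB - 1) / (ρ * gB * ΘB)) 1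

/-- The grant-free achievable rate under the FPA scheme: with ω = ω(g_B) and ω̄ = 1 − ω,
R_F(g_B, g_F) = log₂(1 + ω̄ρg_F) if g_F > g_B (first-stage SIC) and
R_F(g_B, g_F) = log₂(1 + ω̄ρg_F/(1 + ωρg_F)) if g_F ≤ g_B (second-stage SIC). -/
noncomputable def rateF (ρ ΘB gB gF : ℝ) : ℝ :=
  if gB < gF then Real.logb 2 (1 + (1 - omegaFPA ρ ΘB gB) * ρ * gF)
  else Real.logb 2 (1 + (1 - omegaFPA ρ ΘB gB) * ρ * gF / (1 + omegaFPA ρ ΘB gB * ρ * gF))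

set_option maxHeartbeats 800000 in
lemma rate_iff (ρ ΘB Θth ε1 ε2 ε0 ε3 ε4 ε5 : ℝ)
    (hρ : 0 < ρ) (hΘB : 1 < ΘB) (hΘth : 1 < Θth) (hth' : Θth * (ΘB - 1) < ΘB)
    (hε1 : ε1 = (ΘB - 1) / ρ) (hε2 : ε2 = ΘB * (Θth - 1) / ρ) (hε0 : ε0 = ε1 + ε2)
    (hε3 : ε3 = (ΘB - 1) * Θth / (ρ * (Θth - (Θth - 1) * ΘB)))
    (hε4 : ε4 = ΘB * (Θth - 1) / (ρ * (ΘB - Θth * (ΘB - 1)))) (hε5 : ε5 = ε3 + ε4)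
    (b f : ℝ) (hb : ε1 < b) (hf : 0 < f) (hfb : f ≠ b) (hb5 : b ≠ ε5) :
    rateF ρ ΘB b f < Real.logb 2 Θth ↔
      (b < ε0 ∧ b < f ∧ f < ε2 * b / (b - ε1)) ∨ (f < b ∧ b < ε5) ∨
      (ε5 < b ∧ f < ε4 * b / (b - ε3)) := by
  have hc : 0 < ΘB - Θth * (ΘB - 1) := by linarith
  have hcc : Θth - (Θth - 1) * ΘB = ΘB - Θth * (ΘB - 1) := by ring
  have hΘB1 : 0 < ΘB - 1 := by linarith
  have hΘB0 : 0 < ΘB := by linarith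
  have hΘth1 : 0 < Θth - 1 := by linarith
  have hε1p : 0 < ε1 := by rw [hε1]; positivity
  have hε2p : 0 < ε2 := by rw [hε2]; positivity
  have hε3p : 0 < ε3 := by rw [hε3, hcc]; positivity
  have hε4p : 0 < ε4 := by rw [hε4]; positivity
  have hb0 : 0 < b := hε1p.trans hb
  have hbe1 : 0 < b - ε1 := by linarith
  have hB : 0 < b * ΘB := by positivity
  have hε1' : ε1 * ρ = ΘB - 1 := by rw [hε1]; field_simp
  have hε2' : ε2 * ρ = ΘB * (Θth - 1) := by rw [hε2]; field_simp
  -- omega facts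
  have hmin : (ρ * b + 1) * (ΘB - 1) / (ρ * b * ΘB) < 1 := by
    rw [div_lt_one (by positivity)]
    nlinarith [mul_lt_mul_of_pos_left hb hρ, hε1']
  have hω : omegaFPA ρ ΘB b = (ρ * b + 1) * (ΘB - 1) / (ρ * b * ΘB) := min_eq_left hmin.le
  have hωbar : 1 - omegaFPA ρ ΘB b = (b - ε1) / (b * ΘB) := by
    rw [hω, hε1]; field_simp; ring
  have hωpos : 0 < omegaFPA ρ ΘB b := by rw [hω]; positivity
  have hωval : omegaFPA ρ ΘB b = 1 - (b - ε1) / (b * ΘB) := by linarith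
  rcases lt_or_gt_of_ne hfb with hfltb | hbltf
  · -- second stage : f < b
    have hA' : 0 < b * ΘB - (b - ε1) := by nlinarith [mul_pos hb0 hΘB1]
    have hA : 0 < b * ΘB + (b * ΘB - (b - ε1)) * (ρ * f) := by
      have := mul_pos hA' (mul_pos hρ hf); linarith
    have h1 : (1 : ℝ) + (1 - (b - ε1) / (b * ΘB)) * ρ * f
        = (b * ΘB + (b * ΘB - (b - ε1)) * (ρ * f)) / (b * ΘB) := by
      field_simp
    have hargeq : 1 + (1 - omegaFPA ρ ΘB b) * ρ * f / (1 + omegaFPA ρ ΘB b * ρ * f)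
        = (b * ΘB) * (1 + ρ * f) / (b * ΘB + (b * ΘB - (b - ε1)) * (ρ * f)) := by
      rw [hωval, sub_sub_cancel, h1]
      field_simp
      ring
    have hid : Θth * (b * ΘB + (b * ΘB - (b - ε1)) * (ρ * f)) - (b * ΘB) * (1 + ρ * f)
        = ρ * (ΘB - Θth * (ΘB - 1)) * (ε4 * b - f * (b - ε3)) := by
      rw [hε1, hε3, hε4, hcc]
      field_simp
      ring
    have hpc : 0 < ρ * (ΘB - Θth * (ΘB - 1)) := mul_pos hρ hc
    have hiff : rateF ρ ΘB b f < Real.logb 2 Θth ↔ f * (b - ε3) < ε4 * b := by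
      simp only [rateF, if_neg (not_lt.mpr hfltb.le)]
      rw [hargeq, Real.logb_lt_logb_iff one_lt_two (by positivity) (by linarith),
        div_lt_iff₀ hA]
      constructor <;> intro h
      · by_contra hcon
        push_neg at hcon
        have h2 : ε4 * b - f * (b - ε3) ≤ 0 := by linarith
        have h3 := mul_nonpos_iff.mpr (Or.inl ⟨hpc.le, h2⟩)
        linarith
      · have h2 : (0:ℝ) < ε4 * b - f * (b - ε3) := by linarith
        linarith [mul_pos hpc h2]
    rw [hiff]
    constructor
    · intro h
      rcases lt_or_gt_of_ne hb5 with h5 | h5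
      · exact Or.inr (Or.inl ⟨hfltb, h5⟩)
      · have hbε3 : 0 < b - ε3 := by rw [hε5] at h5; linarith
        exact Or.inr (Or.inr ⟨h5, (lt_div_iff₀ hbε3).mpr h⟩)
    · rintro (⟨-, hbf, -⟩ | ⟨-, h5⟩ | ⟨h5, h4⟩)
      · exact absurd hbf (not_lt.mpr hfltb.le)
      · rw [hε5] at h5
        rcases le_or_gt b ε3 with h | h
        · nlinarith [mul_pos hε4p hb0, mul_nonneg hf.le (sub_nonneg.mpr h)]
        · nlinarith [mul_lt_mul_of_pos_right hfltb (sub_pos.mpr h),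
            mul_lt_mul_of_pos_left (show b - ε3 < ε4 by linarith) hb0]
      · have hbε3 : 0 < b - ε3 := by rw [hε5] at h5; linarith
        exact (lt_div_iff₀ hbε3).mp h4
  · -- first stage : b < f
    have hargpos : 0 < 1 + (b - ε1) / (b * ΘB) * ρ * f := by positivity
    have hiff : rateF ρ ΘB b f < Real.logb 2 Θth ↔ f * (b - ε1) < ε2 * b := by
      simp only [rateF, if_pos hbltf]
      rw [hωbar, Real.logb_lt_logb_iff one_lt_two hargpos (by linarith),
        show (b - ε1) / (b * ΘB) * ρ * f = ((b - ε1) * ρ * f) / (b * ΘB) from by ring,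
        add_comm, ← lt_sub_iff_add_lt, div_lt_iff₀ hB,
        show (b - ε1) * ρ * f = ρ * (f * (b - ε1)) from by ring,
        show (Θth - 1) * (b * ΘB) = ρ * (ε2 * b) from by linear_combination (-b) * hε2']
      exact mul_lt_mul_iff_right₀ hρ
    rw [hiff]
    constructor
    · intro h
      have h0 : b < ε0 := by
        rw [hε0]
        nlinarith [mul_lt_mul_of_pos_right hbltf hbe1]
      exact Or.inl ⟨h0, hbltf, (lt_div_iff₀ hbe1).mpr h⟩
    · rintro (⟨-, -, h2⟩ | ⟨hfb', -⟩ | ⟨h5, h4⟩)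
      · exact (lt_div_iff₀ hbe1).mp h2
      · exact absurd hbltf (not_lt.mpr hfb'.le)
      · exfalso
        have hbε3 : 0 < b - ε3 := by rw [hε5] at h5; linarith
        have h4' := (lt_div_iff₀ hbε3).mp h4
        rw [hε5] at h5
        nlinarith [mul_lt_mul_of_pos_left hbltf hbε3]

lemma gammaLaw_singleton (m : ℕ) (l : ℝ) (x : ℝ) : gammaLaw m l {x} = 0 := by
  simp only [gammaLaw]
  exact (withDensity_absolutelyContinuous _ _) (measure_singleton _)

/-- exact FPA outage probability decomposition in the case
1 < Θ_th < Θ_B/(Θ_B − 1) (Theorem 1 of the paper):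
P(G_B ≤ ε1) + P(G_B > ε1, R_F(G_B,G_F) < log₂ Θ_th)
 = P(G_B ≤ ε1) + P(ε1 < G_B < ε0, G_B < G_F < ε2 G_B/(G_B − ε1))
   + P(G_F < G_B, ε1 < G_B < ε5) + P(G_B > ε5, G_F < ε4 G_B/(G_B − ε3)). -/
theorem stmt_15 {Ω : Type*} [MeasurableSpace Ω] (P : Measure Ω) [IsProbabilityMeasure P]
    (m : ℕ) (hm : 1 ≤ m) (lB lF : ℝ) (hlB : 0 < lB) (hlF : 0 < lF)
    (GB GF : Ω → ℝ) (hGB : Measurable GB) (hGF : Measurable GF)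
    (hBlaw : P.map GB = gammaLaw m lB) (hFlaw : P.map GF = gammaLaw m lF)
    (hindep : IndepFun GB GF P)
    (ρ ΘB Θth : ℝ) (hρ : 0 < ρ) (hΘB : 1 < ΘB) (hΘth : 1 < Θth)
    (hth : Θth < ΘB / (ΘB - 1))
    (ε1 ε2 ε0 ε3 ε4 ε5 : ℝ)
    (hε1 : ε1 = (ΘB - 1) / ρ) (hε2 : ε2 = ΘB * (Θth - 1) / ρ) (hε0 : ε0 = ε1 + ε2)
    (hε3 : ε3 = (ΘB - 1) * Θth / (ρ * (Θth - (Θth - 1) * ΘB)))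
    (hε4 : ε4 = ΘB * (Θth - 1) / (ρ * (ΘB - Θth * (ΘB - 1)))) (hε5 : ε5 = ε3 + ε4) :
    P {ω | GB ω ≤ ε1} +
        P {ω | ε1 < GB ω ∧ rateF ρ ΘB (GB ω) (GF ω) < Real.logb 2 Θth} =
      P {ω | GB ω ≤ ε1} +
        P {ω | ε1 < GB ω ∧ GB ω < ε0 ∧ GB ω < GF ω ∧ GF ω < ε2 * GB ω / (GB ω - ε1)} +
        P {ω | GF ω < GB ω ∧ ε1 < GB ω ∧ GB ω < ε5} +
        P {ω | ε5 < GB ω ∧ GF ω < ε4 * GB ω / (GB ω - ε3)} := by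
  have hth' : Θth * (ΘB - 1) < ΘB := by
    rwa [lt_div_iff₀ (by linarith : (0:ℝ) < ΘB - 1)] at hth
  have hc : 0 < ΘB - Θth * (ΘB - 1) := by linarith
  have hΘB1 : 0 < ΘB - 1 := by linarith
  have hΘB0 : 0 < ΘB := by linarith
  have hΘth1 : 0 < Θth - 1 := by linarith
  have hcc : Θth - (Θth - 1) * ΘB = ΘB - Θth * (ΘB - 1) := by ring
  have hε1p : 0 < ε1 := by rw [hε1]; positivity
  have hε3p : 0 < ε3 := by rw [hε3, hcc]; positivity
  have hε4p : 0 < ε4 := by rw [hε4]; positivity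
  have hε13 : ε1 < ε3 := by
    rw [hε1, hε3, hcc, div_lt_div_iff₀ hρ (by positivity)]
    have h1 : 0 < (ΘB - 1) * ρ := by positivity
    nlinarith [mul_pos (mul_pos (show (0:ℝ) < ΘB - 1 by linarith) hρ)
      (show (0:ℝ) < Θth - (ΘB - Θth * (ΘB - 1)) by nlinarith)]
  have hε15 : ε1 < ε5 := by rw [hε5]; linarith
  -- the three events
  set E1 : Set Ω :=
    {ω | ε1 < GB ω ∧ GB ω < ε0 ∧ GB ω < GF ω ∧ GF ω < ε2 * GB ω / (GB ω - ε1)} with hE1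
  set E2 : Set Ω := {ω | GF ω < GB ω ∧ ε1 < GB ω ∧ GB ω < ε5} with hE2
  set E3 : Set Ω := {ω | ε5 < GB ω ∧ GF ω < ε4 * GB ω / (GB ω - ε3)} with hE3
  have mE2 : MeasurableSet E2 := by
    apply MeasurableSet.inter (measurableSet_lt hGF hGB)
    exact MeasurableSet.inter (measurableSet_lt measurable_const hGB)
      (measurableSet_lt hGB measurable_const)
  have mE3 : MeasurableSet E3 := by
    apply MeasurableSet.inter (measurableSet_lt measurable_const hGB)
    exact measurableSet_lt hGF (((measurable_const.mul hGB).div (hGB.sub measurable_const)))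
  -- null sets
  have hN1 : P {ω | GF ω ≤ 0} = 0 := by
    have h : {ω | GF ω ≤ 0} = GF ⁻¹' Set.Iic 0 := rfl
    rw [h, ← Measure.map_apply hGF measurableSet_Iic, hFlaw]
    simp only [gammaLaw]
    rw [withDensity_apply _ measurableSet_Iic]
    rw [setLIntegral_congr_fun measurableSet_Iic (fun x hx => ?_), lintegral_zero]
    rw [if_neg (by simp only [Set.mem_Iic] at hx; linarith), ENNReal.ofReal_zero]
  have hN3 : P {ω | GB ω = ε5} = 0 := by
    have h : {ω | GB ω = ε5} = GB ⁻¹' {ε5} := rfl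
    rw [h, ← Measure.map_apply hGB (measurableSet_singleton _), hBlaw, gammaLaw_singleton]
  have hN2 : P {ω | GB ω = GF ω} = 0 := by
    have hjoint := (indepFun_iff_map_prod_eq_prod_map_map hGB.aemeasurable hGF.aemeasurable).mp
      hindep
    have hD : MeasurableSet {p : ℝ × ℝ | p.1 = p.2} :=
      measurableSet_eq_fun measurable_fst measurable_snd
    have h : {ω | GB ω = GF ω} = (fun ω => (GB ω, GF ω)) ⁻¹' {p : ℝ × ℝ | p.1 = p.2} := rfl
    have hFin : IsProbabilityMeasure (P.map GF) := Measure.isProbabilityMeasure_map hGF.aemeasurable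
    rw [h, ← Measure.map_apply (hGB.prodMk hGF) hD, hjoint, Measure.prod_apply hD]
    have hz : ∀ x : ℝ, (P.map GF) (Prod.mk x ⁻¹' {p : ℝ × ℝ | p.1 = p.2}) = 0 := by
      intro x
      have hpre : Prod.mk x ⁻¹' {p : ℝ × ℝ | p.1 = p.2} = {x} := by
        ext y; simp [eq_comm]
      rw [hpre, hFlaw, gammaLaw_singleton]
    have hz2 : ∀ x : ℝ, (P.map GF) {x} = 0 := fun x => by rw [hFlaw, gammaLaw_singleton]
    simp [hz, hz2]
  -- a.e. identification of the outage event
  have hae : {ω | ε1 < GB ω ∧ rateF ρ ΘB (GB ω) (GF ω) < Real.logb 2 Θth}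
      =ᵐ[P] ((E1 ∪ E2 ∪ E3 : Set Ω)) := by
    rw [Filter.eventuallyEq_set]
    have a1 : ∀ᵐ ω ∂P, ω ∉ {ω | GF ω ≤ 0} := measure_eq_zero_iff_ae_notMem.mp hN1
    have a2 : ∀ᵐ ω ∂P, ω ∉ {ω | GB ω = GF ω} := measure_eq_zero_iff_ae_notMem.mp hN2
    have a3 : ∀ᵐ ω ∂P, ω ∉ {ω | GB ω = ε5} := measure_eq_zero_iff_ae_notMem.mp hN3
    filter_upwards [a1, a2, a3] with ω h1 h2 h3
    simp only [Set.mem_setOf_eq, Set.mem_union, hE1, hE2, hE3]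
    have hf : 0 < GF ω := lt_of_not_ge h1
    by_cases hb : ε1 < GB ω
    · have hfb : GF ω ≠ GB ω := fun h => h2 h.symm
      have hb5 : GB ω ≠ ε5 := h3
      have key := rate_iff ρ ΘB Θth ε1 ε2 ε0 ε3 ε4 ε5 hρ hΘB hΘth hth'
        hε1 hε2 hε0 hε3 hε4 hε5 (GB ω) (GF ω) hb hf hfb hb5
      constructor
      · rintro ⟨-, h⟩
        rcases key.mp h with h' | h' | h'
        · exact Or.inl (Or.inl ⟨hb, h'.1, h'.2.1, h'.2.2⟩)
        · exact Or.inl (Or.inr ⟨h'.1, hb, h'.2⟩)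
        · exact Or.inr h'
      · rintro ((⟨-, ha, hb', hc'⟩ | ⟨ha, -, hb'⟩) | h')
        · exact ⟨hb, key.mpr (Or.inl ⟨ha, hb', hc'⟩)⟩
        · exact ⟨hb, key.mpr (Or.inr (Or.inl ⟨ha, hb'⟩))⟩
        · exact ⟨hb, key.mpr (Or.inr (Or.inr h'))⟩
    · constructor
      · rintro ⟨hb', -⟩; exact absurd hb' hb
      · rintro ((⟨hb', -⟩ | ⟨-, hb', -⟩) | ⟨h5, -⟩)
        · exact absurd hb' hb
        · exact absurd hb' hb
        · exact absurd (hε15.trans h5) hb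
  -- disjointness
  have d12 : Disjoint E1 E2 := by
    rw [Set.disjoint_left]
    rintro ω ⟨-, -, h, -⟩ ⟨h', -⟩
    exact absurd h (not_lt.mpr h'.le)
  have d3 : Disjoint (E1 ∪ E2) E3 := by
    rw [Set.disjoint_left]
    rintro ω (⟨-, -, hbf, -⟩ | ⟨-, -, hlt5⟩) ⟨h5, h4⟩
    · have hb0 : 0 < GB ω := lt_trans (lt_trans hε1p hε15) h5
      have hbε3 : 0 < GB ω - ε3 := by rw [hε5] at h5; linarith
      have h4' := (lt_div_iff₀ hbε3).mp h4
      rw [hε5] at h5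
      nlinarith [mul_lt_mul_of_pos_left hbf hbε3]
    · exact absurd h5 (not_lt.mpr hlt5.le)
  have hsum : P {ω | ε1 < GB ω ∧ rateF ρ ΘB (GB ω) (GF ω) < Real.logb 2 Θth}
      = P E1 + P E2 + P E3 := by
    rw [measure_congr hae, measure_union d3 mE3, measure_union d12 mE2]
  rw [hsum]
  ring
end

section
/- Assume ρ > 0, Θ_B > 1 and Θ_th > Θ_B/(Θ_B − 1). With ε1 = (Θ_B − 1)/ρ, ε2 = Θ_B(Θ_th − 1)/ρ, ε0 = ε1 + ε2, and the FPA grant-free rate R_F(g_B, g_F) defined below, the following holds for independent Gamma random variables G_B, G_F with integer shape m ≥ 1 and rates λ_B, λ_F > 0: P(G_B ≤ ε1) + P(G_B > ε1 and R_F(G_B, G_F) < log₂ Θ_th) = P(G_B ≤ ε1) + P(ε1 < G_B < ε0 and G_B < G_F < ε2 G_B/(G_B − ε1)) + P(G_F < G_B and G_B > ε1). -/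
open MeasureTheory ProbabilityTheory

set_option maxHeartbeats 1000000 in
/-- Pointwise characterisation of the FPA outage event in the case Θ_th > Θ_B/(Θ_B − 1). -/
theorem stmt16_key (ρ ΘB Θth : ℝ) (hρ : 0 < ρ) (hΘB : 1 < ΘB) (hth : ΘB / (ΘB - 1) < Θth)
    (ε1 ε2 ε0 : ℝ)
    (hε1 : ε1 = (ΘB - 1) / ρ) (hε2 : ε2 = ΘB * (Θth - 1) / ρ) (hε0 : ε0 = ε1 + ε2)
    (b f : ℝ) (hf : 0 < f) (hne : b ≠ f) (h1 : ε1 < b) :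
    (rateF ρ ΘB b f < Real.logb 2 Θth ↔
      ((b < ε0 ∧ b < f ∧ f < ε2 * b / (b - ε1)) ∨ f < b)) := by
  have hΘB1 : 0 < ΘB - 1 := by linarith
  have hε1pos : 0 < ε1 := by rw [hε1]; positivity
  have hb : 0 < b := hε1pos.trans h1
  have hb1 : 0 < b - ε1 := by linarith
  have hbt : 0 < b * ΘB := by positivity
  have hρε1 : ρ * ε1 = ΘB - 1 := by rw [hε1]; field_simp
  have hρε2 : ρ * ε2 = ΘB * (Θth - 1) := by rw [hε2]; field_simp
  have hth' : ΘB < Θth * (ΘB - 1) := by rw [div_lt_iff₀ hΘB1] at hth; nlinarith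
  have hΘth1 : 1 < Θth := by nlinarith
  obtain ⟨e, he_def⟩ : ∃ e, e = (ρ * b + 1) * (ΘB - 1) / (ρ * b * ΘB) := ⟨_, rfl⟩
  have hρbt : (0:ℝ) < ρ * b * ΘB := by positivity
  have he0 : 0 < e := by rw [he_def]; positivity
  have he1 : e < 1 := by
    rw [he_def, div_lt_one (by positivity)]
    nlinarith
  have homega : omegaFPA ρ ΘB b = e := by
    rw [omegaFPA, ← he_def]; exact min_eq_left he1.le
  have h1e : 1 - e = (b - ε1) / (b * ΘB) := by
    rw [he_def]
    field_simp
    linear_combination hρε1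
  rw [rateF, homega]
  by_cases hbf : b < f
  · rw [if_pos hbf]
    have hX : (0:ℝ) < (1 - e) * ρ * f :=
      mul_pos (mul_pos (by linarith) hρ) hf
    rw [Real.logb_lt_logb_iff (by norm_num) (by linarith) (by linarith)]
    have hiff : 1 + (1 - e) * ρ * f < Θth ↔ f * (b - ε1) < ε2 * b := by
      have hA : (1 - e) * ρ * f = (b - ε1) * ρ * f / (b * ΘB) := by rw [h1e]; ring
      rw [hA, show (1:ℝ) + (b - ε1) * ρ * f / (b * ΘB) < Θth ↔
            (b - ε1) * ρ * f / (b * ΘB) < Θth - 1 from ⟨fun h => by linarith, fun h => by linarith⟩,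
          div_lt_iff₀ hbt]
      constructor <;> intro h <;> nlinarith [mul_pos hρ hf, mul_pos hρ hb]
    rw [hiff]
    constructor
    · intro h
      left
      have hfd : f < ε2 * b / (b - ε1) := by rw [lt_div_iff₀ hb1]; exact h
      refine ⟨?_, hbf, hfd⟩
      nlinarith
    · rintro (⟨h0, hbf', hfd⟩ | hfb)
      · rw [lt_div_iff₀ hb1] at hfd; exact hfd
      · exact absurd hfb (by linarith)
  · rw [if_neg hbf]
    have hfb : f < b := lt_of_le_of_ne (not_lt.mp hbf) (Ne.symm hne)
    have heρf : (0:ℝ) < e * ρ * f := mul_pos (mul_pos he0 hρ) hf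
    have hden : 0 < 1 + e * ρ * f := by linarith
    have hXnn : (0:ℝ) ≤ (1 - e) * ρ * f / (1 + e * ρ * f) :=
      div_nonneg (by nlinarith [mul_pos (mul_pos (by linarith : (0:ℝ) < 1 - e) hρ) hf]) hden.le
    rw [Real.logb_lt_logb_iff (by norm_num) (by linarith) (by linarith)]
    constructor
    · intro _; right; exact hfb
    · intro _
      have hkey : (1 - e) * (ΘB - 1) < e := by
        rw [h1e, he_def, div_mul_eq_mul_div, div_lt_div_iff₀ hbt hρbt]
        have hid : (ρ * b + 1) * (ΘB - 1) * (b * ΘB) - (b - ε1) * (ΘB - 1) * (ρ * b * ΘB)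
            = (ΘB - 1) * (b * ΘB) * ΘB := by linear_combination (ΘB - 1) * (b * ΘB) * hρε1
        nlinarith [mul_pos (mul_pos hΘB1 hbt) (by linarith : (0:ℝ) < ΘB)]
      have hth1'' : 1 < (Θth - 1) * (ΘB - 1) := by nlinarith
      have h2 : (1 - e) * ρ * f * (ΘB - 1) < 1 + e * ρ * f := by
        nlinarith [mul_lt_mul_of_pos_right hkey (mul_pos hρ hf)]
      have hstep : (1 - e) * ρ * f / (1 + e * ρ * f) < Θth - 1 := by
        rw [div_lt_iff₀ hden]
        nlinarith [mul_lt_mul_of_pos_left hth1'' hden]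
      linarith

/-- exact FPA outage probability decomposition in the case
Θ_th > Θ_B/(Θ_B − 1) (Theorem 1 of the paper):
P(G_B ≤ ε1) + P(G_B > ε1, R_F(G_B,G_F) < log₂ Θ_th)
 = P(G_B ≤ ε1) + P(ε1 < G_B < ε0, G_B < G_F < ε2 G_B/(G_B − ε1)) + P(G_F < G_B, G_B > ε1). -/
theorem stmt_16 {Ω : Type*} [MeasurableSpace Ω] (P : Measure Ω) [IsProbabilityMeasure P]
    (m : ℕ) (hm : 1 ≤ m) (lB lF : ℝ) (hlB : 0 < lB) (hlF : 0 < lF)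
    (GB GF : Ω → ℝ) (hGB : Measurable GB) (hGF : Measurable GF)
    (hBlaw : P.map GB = gammaLaw m lB) (hFlaw : P.map GF = gammaLaw m lF)
    (hindep : IndepFun GB GF P)
    (ρ ΘB Θth : ℝ) (hρ : 0 < ρ) (hΘB : 1 < ΘB) (hth : ΘB / (ΘB - 1) < Θth)
    (ε1 ε2 ε0 : ℝ)
    (hε1 : ε1 = (ΘB - 1) / ρ) (hε2 : ε2 = ΘB * (Θth - 1) / ρ) (hε0 : ε0 = ε1 + ε2) :
    P {ω | GB ω ≤ ε1} +
        P {ω | ε1 < GB ω ∧ rateF ρ ΘB (GB ω) (GF ω) < Real.logb 2 Θth} =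
      P {ω | GB ω ≤ ε1} +
        P {ω | ε1 < GB ω ∧ GB ω < ε0 ∧ GB ω < GF ω ∧ GF ω < ε2 * GB ω / (GB ω - ε1)} +
        P {ω | GF ω < GB ω ∧ ε1 < GB ω} := by
  -- the two null sets we discard
  have hF0 : P {ω | GF ω ≤ 0} = 0 := by
    have hs : {ω | GF ω ≤ 0} = GF ⁻¹' (Set.Iic 0) := rfl
    rw [hs, ← Measure.map_apply hGF measurableSet_Iic, hFlaw, gammaLaw,
      withDensity_apply _ measurableSet_Iic]
    calc ∫⁻ x in Set.Iic 0, ENNReal.ofReal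
          (if 0 < x then lF ^ m * x ^ (m - 1) * Real.exp (-(lF * x)) / Real.Gamma m else 0) ∂volume
        = ∫⁻ _ in Set.Iic (0:ℝ), (0:ENNReal) ∂volume := by
          refine setLIntegral_congr_fun measurableSet_Iic ?_
          intro x hx
          beta_reduce
          rw [if_neg (by simpa using hx)]
          simp
      _ = 0 := by simp
  haveI hFprob : IsProbabilityMeasure (gammaLaw m lF) :=
    hFlaw ▸ Measure.isProbabilityMeasure_map hGF.aemeasurable
  have hprod : P.map (fun ω => (GB ω, GF ω)) = (P.map GB).prod (P.map GF) :=
    (indepFun_iff_map_prod_eq_prod_map_map hGB.aemeasurable hGF.aemeasurable).mp hindep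
  have hdiag : MeasurableSet {p : ℝ × ℝ | p.1 = p.2} :=
    measurableSet_eq_fun measurable_fst measurable_snd
  have hEq : P {ω | GB ω = GF ω} = 0 := by
    have hs : {ω | GB ω = GF ω} = (fun ω => (GB ω, GF ω)) ⁻¹' {p | p.1 = p.2} := rfl
    rw [hs, ← Measure.map_apply (hGB.prodMk hGF) hdiag, hprod, hBlaw, hFlaw,
      Measure.prod_apply hdiag]
    have hz : ∀ x : ℝ, (gammaLaw m lF) {x} = 0 := fun x =>
      (withDensity_absolutelyContinuous volume _) (measure_singleton x)
    simp [hz]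
  have hN : P ({ω | GF ω ≤ 0} ∪ {ω | GB ω = GF ω}) = 0 := measure_union_null hF0 hEq
  -- the sets
  set E2 := {ω | ε1 < GB ω ∧ GB ω < ε0 ∧ GB ω < GF ω ∧ GF ω < ε2 * GB ω / (GB ω - ε1)} with hE2
  set E3 := {ω | GF ω < GB ω ∧ ε1 < GB ω} with hE3
  set SL := {ω | ε1 < GB ω ∧ rateF ρ ΘB (GB ω) (GF ω) < Real.logb 2 Θth} with hSL
  set N := {ω | GF ω ≤ 0} ∪ {ω | GB ω = GF ω} with hNdef
  have hsub : SL \ N = (E2 ∪ E3) \ N := by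
    ext ω
    simp only [hSL, hE2, hE3, hNdef, Set.mem_diff, Set.mem_union, Set.mem_setOf_eq, not_or,
      not_le]
    constructor
    · rintro ⟨⟨h1', hr⟩, hf0, hne⟩
      refine ⟨?_, hf0, hne⟩
      have := (stmt16_key ρ ΘB Θth hρ hΘB hth ε1 ε2 ε0 hε1 hε2 hε0
        (GB ω) (GF ω) hf0 hne h1').mp hr
      rcases this with h | h
      · exact Or.inl ⟨h1', h⟩
      · exact Or.inr ⟨h, h1'⟩
    · rintro ⟨hmem, hf0, hne⟩
      have h1' : ε1 < GB ω := by rcases hmem with h | h; exacts [h.1, h.2]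
      refine ⟨⟨h1', ?_⟩, hf0, hne⟩
      refine (stmt16_key ρ ΘB Θth hρ hΘB hth ε1 ε2 ε0 hε1 hε2 hε0
        (GB ω) (GF ω) hf0 hne h1').mpr ?_
      rcases hmem with h | h
      · exact Or.inl h.2
      · exact Or.inr h.1
  have hE3meas : MeasurableSet E3 :=
    (measurableSet_lt hGF hGB).inter (measurableSet_lt measurable_const hGB)
  have hdisj : Disjoint E2 E3 := by
    rw [Set.disjoint_left]
    rintro ω ⟨_, _, h2, _⟩ ⟨h3, _⟩
    exact absurd (h2.trans h3) (lt_irrefl _)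
  have hPSL : P SL = P E2 + P E3 := by
    calc P SL = P (SL \ N) := (measure_diff_null hN).symm
      _ = P ((E2 ∪ E3) \ N) := by rw [hsub]
      _ = P (E2 ∪ E3) := measure_diff_null hN
      _ = P E2 + P E3 := measure_union hdisj hE3meas
  rw [hPSL, add_assoc]
end

section
/- Assume Θ_B > 1 and Θ_th > Θ_B/(Θ_B − 1). Let G_B, G_F be independent Gamma random variables with integer shape m ≥ 1 and rates λ_B, λ_F > 0, and for ρ > 0 set ε1(ρ) = (Θ_B − 1)/ρ, ε2(ρ) = Θ_B(Θ_th − 1)/ρ, ε0(ρ) = ε1(ρ) + ε2(ρ), and define the FPA outage probability P_out(ρ) = P(G_B ≤ ε1(ρ)) + P(ε1(ρ) < G_B < ε0(ρ) and G_B < G_F < ε2(ρ)G_B/(G_B − ε1(ρ))) + P(G_F < G_B and G_B > ε1(ρ)). Then lim_{ρ → ∞} P_out(ρ) = P(G_F < G_B), and this limit is strictly positive; in particular P_out(ρ) does not tend to 0 as ρ → ∞ (outage probability floor, diversity order 0). -/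
open MeasureTheory ProbabilityTheory Filter

open Set

lemma gammaLaw_apply (m : ℕ) (l : ℝ) {s : Set ℝ} (hs : MeasurableSet s) :
    gammaLaw m l s = ∫⁻ x in s, ENNReal.ofReal
      (if 0 < x then l ^ m * x ^ (m - 1) * Real.exp (-(l * x)) / Real.Gamma m else 0) :=
  withDensity_apply _ hs

lemma gammaLaw_Iic_le (m : ℕ) (hm : 1 ≤ m) (l : ℝ) (hl : 0 < l) {t : ℝ}
    (ht0 : 0 ≤ t) (ht1 : t ≤ 1) :
    gammaLaw m l (Iic t) ≤ ENNReal.ofReal (l ^ m / Real.Gamma m * t) := by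
  have hΓ : 0 < Real.Gamma m :=
    Real.Gamma_pos_of_pos (by exact_mod_cast Nat.lt_of_lt_of_le Nat.zero_lt_one hm)
  rw [gammaLaw_apply m l measurableSet_Iic]
  have hsplit : Iic t = Iic 0 ∪ Ioc 0 t := (Set.Iic_union_Ioc_eq_Iic ht0).symm
  rw [hsplit, lintegral_union measurableSet_Ioc (Set.Iic_disjoint_Ioc le_rfl)]
  have h1 : (∫⁻ x in Iic (0:ℝ), ENNReal.ofReal
      (if 0 < x then l ^ m * x ^ (m - 1) * Real.exp (-(l * x)) / Real.Gamma m else 0)) = 0 := by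
    rw [show (∫⁻ x in Iic (0:ℝ), ENNReal.ofReal
        (if 0 < x then l ^ m * x ^ (m - 1) * Real.exp (-(l * x)) / Real.Gamma m else 0))
        = ∫⁻ _x in Iic (0:ℝ), 0 from setLIntegral_congr_fun measurableSet_Iic
      (fun x hx => by
        simp only [if_neg (not_lt.mpr (mem_Iic.mp hx)), ENNReal.ofReal_zero])]
    simp
  rw [h1, zero_add]
  have h2 : (∫⁻ x in Ioc (0:ℝ) t, ENNReal.ofReal
      (if 0 < x then l ^ m * x ^ (m - 1) * Real.exp (-(l * x)) / Real.Gamma m else 0))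
      ≤ ∫⁻ _x in Ioc (0:ℝ) t, ENNReal.ofReal (l ^ m / Real.Gamma m) := by
    apply setLIntegral_mono' measurableSet_Ioc
    intro x hx
    rw [if_pos hx.1]
    apply ENNReal.ofReal_le_ofReal
    have hx1 : x ^ (m-1) ≤ 1 := pow_le_one₀ hx.1.le (le_trans hx.2 ht1)
    have he : Real.exp (-(l*x)) ≤ 1 :=
      Real.exp_le_one_iff.mpr (by nlinarith [mul_pos hl hx.1])
    have hlm : (0:ℝ) ≤ l ^ m := by positivity
    have key : x ^ (m-1) * Real.exp (-(l*x)) ≤ 1 :=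
      mul_le_one₀ hx1 (Real.exp_pos _).le he
    rw [div_le_div_iff_of_pos_right hΓ, mul_assoc]
    nlinarith [mul_le_mul_of_nonneg_left key hlm]
  calc _ ≤ ∫⁻ _x in Ioc (0:ℝ) t, ENNReal.ofReal (l ^ m / Real.Gamma m) := h2
    _ = ENNReal.ofReal (l ^ m / Real.Gamma m) * volume (Ioc (0:ℝ) t) := setLIntegral_const _ _
    _ = ENNReal.ofReal (l ^ m / Real.Gamma m) * ENNReal.ofReal t := by
        rw [Real.volume_Ioc, sub_zero]
    _ = ENNReal.ofReal (l ^ m / Real.Gamma m * t) := by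
        rw [ENNReal.ofReal_mul (by positivity)]

lemma gammaLaw_Icc_pos (m : ℕ) (hm : 1 ≤ m) (l : ℝ) (hl : 0 < l) {a b : ℝ}
    (ha : 0 < a) (hab : a < b) : 0 < gammaLaw m l (Icc a b) := by
  have hΓ : 0 < Real.Gamma m :=
    Real.Gamma_pos_of_pos (by exact_mod_cast Nat.lt_of_lt_of_le Nat.zero_lt_one hm)
  set c : ℝ := l ^ m * a ^ (m-1) * Real.exp (-(l * b)) / Real.Gamma m with hc
  have hcpos : 0 < c := by positivity
  rw [gammaLaw_apply m l measurableSet_Icc]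
  have hlow : (∫⁻ _x in Icc a b, ENNReal.ofReal c) ≤ ∫⁻ x in Icc a b, ENNReal.ofReal
      (if 0 < x then l ^ m * x ^ (m - 1) * Real.exp (-(l * x)) / Real.Gamma m else 0) := by
    apply setLIntegral_mono' measurableSet_Icc
    intro x hx
    rw [if_pos (lt_of_lt_of_le ha hx.1)]
    apply ENNReal.ofReal_le_ofReal
    rw [hc, div_le_div_iff_of_pos_right hΓ]
    have h1 : a ^ (m-1) ≤ x ^ (m-1) := pow_le_pow_left₀ ha.le hx.1 _
    have h2 : Real.exp (-(l*b)) ≤ Real.exp (-(l*x)) := by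
      apply Real.exp_le_exp.mpr; nlinarith [hx.2]
    have hlm : (0:ℝ) ≤ l ^ m := by positivity
    nlinarith [Real.exp_pos (-(l*b)), Real.exp_pos (-(l*x)), pow_nonneg ha.le (m-1),
      pow_nonneg (lt_of_lt_of_le ha hx.1).le (m-1),
      mul_le_mul h1 h2 (Real.exp_pos _).le (pow_nonneg (lt_of_lt_of_le ha hx.1).le _),
      mul_le_mul_of_nonneg_left
        (mul_le_mul h1 h2 (Real.exp_pos _).le (pow_nonneg (lt_of_lt_of_le ha hx.1).le _)) hlm]
  refine lt_of_lt_of_le ?_ hlow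
  rw [setLIntegral_const, Real.volume_Icc]
  exact ENNReal.mul_pos (by simp [ENNReal.ofReal_eq_zero, not_le, hcpos])
    (by simp [ENNReal.ofReal_eq_zero, not_le]; linarith) |>.trans_le le_rfl
/-- Assume Θ_B > 1 and Θ_th > Θ_B/(Θ_B − 1). With ε1(ρ) = (Θ_B − 1)/ρ,
ε2(ρ) = Θ_B(Θ_th − 1)/ρ, ε0(ρ) = ε1(ρ) + ε2(ρ), and FPA outage probability
P_out(ρ) = P(G_B ≤ ε1(ρ)) + P(ε1(ρ) < G_B < ε0(ρ), G_B < G_F < ε2(ρ)G_B/(G_B − ε1(ρ)))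
         + P(G_F < G_B, G_B > ε1(ρ)),
one has lim_{ρ→∞} P_out(ρ) = P(G_F < G_B) > 0; in particular P_out does not tend to 0
(outage probability floor, diversity order 0). -/
theorem stmt_18 {Ω : Type*} [MeasurableSpace Ω] (P : Measure Ω) [IsProbabilityMeasure P]
    (m : ℕ) (hm : 1 ≤ m) (lB lF : ℝ) (hlB : 0 < lB) (hlF : 0 < lF)
    (GB GF : Ω → ℝ) (hGB : Measurable GB) (hGF : Measurable GF)
    (hBlaw : P.map GB = gammaLaw m lB) (hFlaw : P.map GF = gammaLaw m lF)
    (hindep : IndepFun GB GF P)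
    (ΘB Θth : ℝ) (hΘB : 1 < ΘB) (hth : ΘB / (ΘB - 1) < Θth)
    (Pout : ℝ → ℝ)
    (hPout : ∀ ρ : ℝ, 0 < ρ →
      Pout ρ =
        (P {ω | GB ω ≤ (ΘB - 1) / ρ}).toReal +
          (P {ω | (ΘB - 1) / ρ < GB ω ∧ GB ω < (ΘB - 1) / ρ + ΘB * (Θth - 1) / ρ ∧
            GB ω < GF ω ∧
            GF ω < (ΘB * (Θth - 1) / ρ) * GB ω / (GB ω - (ΘB - 1) / ρ)}).toReal +
          (P {ω | GF ω < GB ω ∧ (ΘB - 1) / ρ < GB ω}).toReal) :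
    Tendsto Pout atTop (nhds (P {ω | GF ω < GB ω}).toReal) ∧
      0 < (P {ω | GF ω < GB ω}).toReal ∧
      ¬ Tendsto Pout atTop (nhds 0) := by
  have hΘB1 : 0 < ΘB - 1 := by linarith
  have hfrac1 : (1:ℝ) < ΘB / (ΘB - 1) := by
    rw [lt_div_iff₀ hΘB1]; linarith
  have hth1 : 0 < Θth - 1 := by linarith
  set c1 : ℝ := ΘB - 1 with hc1def
  set c2 : ℝ := ΘB * (Θth - 1) with hc2def
  have hc1 : 0 < c1 := hΘB1
  have hc2 : 0 < c2 := mul_pos (by linarith) hth1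
  have hΓB : 0 < Real.Gamma m :=
    Real.Gamma_pos_of_pos (by exact_mod_cast Nat.lt_of_lt_of_le Nat.zero_lt_one hm)
  set K : ℝ := lB ^ m / Real.Gamma m with hKdef
  have hK : 0 ≤ K := by positivity
  have hBle : ∀ t : ℝ, 0 ≤ t → t ≤ 1 → (P {ω | GB ω ≤ t}).toReal ≤ K * t := by
    intro t ht0 ht1
    have hPeq : P {ω | GB ω ≤ t} = gammaLaw m lB (Iic t) := by
      rw [show {ω | GB ω ≤ t} = GB ⁻¹' Iic t from rfl,
        ← Measure.map_apply hGB measurableSet_Iic, hBlaw]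
    rw [hPeq]
    calc (gammaLaw m lB (Iic t)).toReal ≤ (ENNReal.ofReal (K * t)).toReal :=
        ENNReal.toReal_mono ENNReal.ofReal_ne_top (gammaLaw_Iic_le m hm lB hlB ht0 ht1)
      _ = K * t := ENNReal.toReal_ofReal (by positivity)
  set L := (P {ω | GF ω < GB ω}).toReal with hLdef
  -- positivity of the limit
  have hposF : 0 < P (GF ⁻¹' Iio 1) := by
    rw [← Measure.map_apply hGF measurableSet_Iio, hFlaw]
    refine lt_of_lt_of_le
      (gammaLaw_Icc_pos m hm lF hlF (by norm_num : (0:ℝ) < 1/4) (by norm_num : (1/4:ℝ) < 1/2))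
      (measure_mono fun x hx => ?_)
    exact lt_of_le_of_lt hx.2 (by norm_num)
  have hposB : 0 < P (GB ⁻¹' Ioi 1) := by
    rw [← Measure.map_apply hGB measurableSet_Ioi, hBlaw]
    refine lt_of_lt_of_le
      (gammaLaw_Icc_pos m hm lB hlB (by norm_num : (0:ℝ) < 2) (by norm_num : (2:ℝ) < 3))
      (measure_mono fun x hx => ?_)
    exact lt_of_lt_of_le one_lt_two hx.1
  have hprod : P (GB ⁻¹' Ioi 1 ∩ GF ⁻¹' Iio 1) = P (GB ⁻¹' Ioi 1) * P (GF ⁻¹' Iio 1) :=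
    hindep.measure_inter_preimage_eq_mul (Ioi 1) (Iio 1) measurableSet_Ioi measurableSet_Iio
  have hLpos0 : 0 < P {ω | GF ω < GB ω} := by
    have h1 : 0 < P (GB ⁻¹' Ioi 1 ∩ GF ⁻¹' Iio 1) := by
      rw [hprod]; exact ENNReal.mul_pos hposB.ne' hposF.ne'
    refine lt_of_lt_of_le h1 (measure_mono ?_)
    rintro ω ⟨ha, hb⟩
    exact show GF ω < GB ω from lt_trans (mem_Iio.mp hb) (mem_Ioi.mp ha)
  have hLpos : 0 < L := ENNReal.toReal_pos hLpos0.ne' (measure_ne_top P _)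
  -- tendsto of error terms
  have hdiv : ∀ c : ℝ, Tendsto (fun ρ : ℝ => c / ρ) atTop (nhds 0) := fun c =>
    Tendsto.div_atTop (a := c) tendsto_const_nhds tendsto_id
  have hd1 : Tendsto (fun ρ : ℝ => K * (c1 / ρ)) atTop (nhds 0) := by
    simpa using (hdiv c1).const_mul K
  have hd2 : Tendsto (fun ρ : ℝ => K * ((c1 + c2) / ρ)) atTop (nhds 0) := by
    simpa using (hdiv (c1 + c2)).const_mul K
  have hlowT : Tendsto (fun ρ : ℝ => L - K * (c1 / ρ)) atTop (nhds L) := by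
    simpa using (tendsto_const_nhds (x := L) (f := atTop)).sub hd1
  have hupT : Tendsto (fun ρ : ℝ => L + K * (c1 / ρ) + K * ((c1 + c2) / ρ)) atTop (nhds L) := by
    simpa using ((tendsto_const_nhds (x := L) (f := atTop)).add hd1).add hd2
  have hev : ∀ᶠ ρ : ℝ in atTop,
      L - K * (c1 / ρ) ≤ Pout ρ ∧ Pout ρ ≤ L + K * (c1 / ρ) + K * ((c1 + c2) / ρ) := by
    filter_upwards [eventually_ge_atTop (max 1 (c1 + c2))] with ρ hρ
    have hρ1 : (1:ℝ) ≤ ρ := le_trans (le_max_left _ _) hρ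
    have hρ2 : c1 + c2 ≤ ρ := le_trans (le_max_right _ _) hρ
    have hρpos : 0 < ρ := by linarith
    have h01 : 0 ≤ c1 / ρ := by positivity
    have h02 : 0 ≤ (c1 + c2) / ρ := by positivity
    have h11 : c1 / ρ ≤ 1 := (div_le_one hρpos).mpr (by linarith)
    have h12 : (c1 + c2) / ρ ≤ 1 := (div_le_one hρpos).mpr hρ2
    rw [hPout ρ hρpos]
    set A := (P {ω | GB ω ≤ c1 / ρ}).toReal with hAdef
    set B := (P {ω | c1 / ρ < GB ω ∧ GB ω < c1 / ρ + c2 / ρ ∧ GB ω < GF ω ∧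
      GF ω < c2 / ρ * GB ω / (GB ω - c1 / ρ)}).toReal with hBdef
    set C := (P {ω | GF ω < GB ω ∧ c1 / ρ < GB ω}).toReal with hCdef
    have hA : A ≤ K * (c1 / ρ) := hBle _ h01 h11
    have hAnn : 0 ≤ A := ENNReal.toReal_nonneg
    have hBnn : 0 ≤ B := ENNReal.toReal_nonneg
    have hB : B ≤ K * ((c1 + c2) / ρ) := by
      have hsubB : {ω | c1 / ρ < GB ω ∧ GB ω < c1 / ρ + c2 / ρ ∧ GB ω < GF ω ∧
          GF ω < c2 / ρ * GB ω / (GB ω - c1 / ρ)} ⊆ {ω | GB ω ≤ (c1 + c2) / ρ} := by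
        intro ω hω
        have h := hω.2.1
        rw [← add_div] at h
        exact le_of_lt h
      exact le_trans (ENNReal.toReal_mono (measure_ne_top P _) (measure_mono hsubB))
        (hBle _ h02 h12)
    have hC_le : C ≤ L :=
      ENNReal.toReal_mono (measure_ne_top P _) (measure_mono fun ω hω => hω.1)
    have hC_ge : L ≤ C + A := by
      have hsub : {ω | GF ω < GB ω} ⊆
          {ω | GF ω < GB ω ∧ c1 / ρ < GB ω} ∪ {ω | GB ω ≤ c1 / ρ} := by
        intro ω hω
        by_cases h : c1 / ρ < GB ω
        · exact Or.inl ⟨hω, h⟩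
        · exact Or.inr (not_lt.mp h)
      have hmeas := (measure_mono (μ := P) hsub).trans (measure_union_le _ _)
      have h2 := ENNReal.toReal_mono
        (ENNReal.add_ne_top.mpr ⟨measure_ne_top P _, measure_ne_top P _⟩) hmeas
      rwa [ENNReal.toReal_add (measure_ne_top P _) (measure_ne_top P _)] at h2
    constructor
    · linarith
    · linarith
  have hT : Tendsto Pout atTop (nhds L) :=
    tendsto_of_tendsto_of_tendsto_of_le_of_le' hlowT hupT
      (hev.mono fun ρ h => h.1) (hev.mono fun ρ h => h.2)
  refine ⟨hT, hLpos, fun h0 => ?_⟩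
  have hL0 : L = 0 := tendsto_nhds_unique hT h0
  linarith
end
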